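/- arXiv:2408.07813 — 8 statements merged into one kernel-verified Lean document; each statement's English description precedes it below -/
import Mathlib

section
/- Let G be a locally compact Hausdorff abelian topological group and let A ⊆ G. Then A is relatively compact if and only if A is coarsely bounded, i.e., f(A) is a bounded subset of ℝ for every continuous pseudonorm f on G. -/
open Pointwise Set

namespace RCCB
variable {G : Type*} [CommGroup G]

noncomputable def cost (l : List (G × ENNReal)) : ENNReal := (l.map Prod.snd).sum
def gprod (l : List (G × ENNReal)) : G := (l.map Prod.fst).prod

noncomputable def nu (S : Set (G × ENNReal)) (g : G) : ENNReal :=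
  ⨅ l : {l : List (G × ENNReal) // (∀ p ∈ l, p ∈ S) ∧ gprod l = g}, cost l.1

lemma nu_le {S : Set (G × ENNReal)} {g : G} (l : List (G × ENNReal))
    (hl : ∀ p ∈ l, p ∈ S) (hg : gprod l = g) : nu S g ≤ cost l :=
  iInf_le (fun l : {l : List (G × ENNReal) // (∀ p ∈ l, p ∈ S) ∧ gprod l = g} => cost l.1)
    ⟨l, hl, hg⟩

lemma le_nu {S : Set (G × ENNReal)} {g : G} {C : ENNReal}
    (h : ∀ l : List (G × ENNReal), (∀ p ∈ l, p ∈ S) → gprod l = g → C ≤ cost l) :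
    C ≤ nu S g :=
  le_iInf fun l => h l.1 l.2.1 l.2.2

lemma nu_one (S : Set (G × ENNReal)) : nu S 1 = 0 :=
  le_antisymm (by simpa [cost, gprod] using nu_le (S := S) [] (by simp) (by simp [gprod]))
    (zero_le)

lemma gprod_cons (p : G × ENNReal) (l : List (G × ENNReal)) :
    gprod (p :: l) = p.1 * gprod l := by simp [gprod]

lemma cost_cons (p : G × ENNReal) (l : List (G × ENNReal)) :
    cost (p :: l) = p.2 + cost l := by simp [cost]

lemma gprod_append (l₁ l₂ : List (G × ENNReal)) :
    gprod (l₁ ++ l₂) = gprod l₁ * gprod l₂ := by simp [gprod]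

lemma cost_append (l₁ l₂ : List (G × ENNReal)) :
    cost (l₁ ++ l₂) = cost l₁ + cost l₂ := by simp [cost]

lemma nu_mul (S : Set (G × ENNReal)) (g h : G) : nu S (g * h) ≤ nu S g + nu S h := by
  rw [nu, nu, ENNReal.iInf_add]
  refine le_iInf fun i => ?_
  rw [nu, ENNReal.add_iInf]
  refine le_iInf fun j => ?_
  refine le_trans (nu_le (i.1 ++ j.1) ?_ ?_) (le_of_eq (cost_append _ _))
  · intro q hq
    rcases List.mem_append.1 hq with h' | h'
    exacts [i.2.1 q h', j.2.1 q h']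
  · rw [gprod_append, i.2.2, j.2.2]

lemma gprod_inv_map (l : List (G × ENNReal)) :
    gprod (l.map fun p => (p.1⁻¹, p.2)) = (gprod l)⁻¹ := by
  induction l with
  | nil => simp [gprod]
  | cons p l ih =>
    simp only [List.map_cons, gprod_cons, ih, mul_inv]

lemma nu_inv (S : Set (G × ENNReal)) (hS : ∀ p ∈ S, ((p.1)⁻¹, p.2) ∈ S) (g : G) :
    nu S g⁻¹ ≤ nu S g := by
  refine le_iInf fun l => ?_
  refine le_trans (nu_le (l.1.map fun p => (p.1⁻¹, p.2)) ?_ ?_) ?_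
  · intro p hp
    simp only [List.mem_map] at hp
    obtain ⟨q, hq, rfl⟩ := hp
    exact hS q (l.2.1 q hq)
  · rw [gprod_inv_map, l.2.2]
  · simp [cost, List.map_map, Function.comp_def]

lemma nu_inv_eq (S : Set (G × ENNReal)) (hS : ∀ p ∈ S, ((p.1)⁻¹, p.2) ∈ S) (g : G) :
    nu S g⁻¹ = nu S g :=
  le_antisymm (nu_inv S hS g) (by simpa using nu_inv S hS g⁻¹)


noncomputable def u (j : ℕ) : ENNReal := (2 : ENNReal)⁻¹ ^ j

lemma u_ne_top (j : ℕ) : u j ≠ ⊤ := by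
  simp [u, ENNReal.pow_ne_top, ENNReal.inv_ne_top]

lemma u_ne_zero (j : ℕ) : u j ≠ 0 := by
  simp [u]

lemma u_succ (j : ℕ) : u j = 2 * u (j + 1) := by
  rw [u, u, pow_succ', ← mul_assoc, ENNReal.mul_inv_cancel (by norm_num) (by norm_num), one_mul]

lemma u_lt_of_gt {i j : ℕ} (h : j < i) : u i < u j := by
  have h2 : u i ≤ u (j + 1) := pow_le_pow_right_of_le_one' (by simp [ENNReal.inv_le_one]) h
  refine lt_of_le_of_lt h2 ?_
  rw [u_succ j]
  conv_lhs => rw [← one_mul (u (j+1))]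
  exact (ENNReal.mul_lt_mul_iff_left (u_ne_zero _) (u_ne_top _)).2 ENNReal.one_lt_two

lemma gprod_mem_pow {l : List (G × ENNReal)} {T : Set G} (h : ∀ p ∈ l, p.1 ∈ T) :
    gprod l ∈ T ^ l.length := by
  induction l with
  | nil => simp [gprod]
  | cons p l ih =>
    have : gprod (p :: l) = p.1 * gprod l := by simp [gprod]
    rw [this, List.length_cons, pow_succ, mul_comm (T ^ l.length) T]
    exact Set.mul_mem_mul (h p (List.mem_cons_self)) (ih fun q hq => h q (List.mem_cons_of_mem _ hq))

lemma cost_const {l : List (G × ENNReal)} {c : ENNReal} (h : ∀ p ∈ l, p.2 = c) :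
    cost l = l.length * c := by
  induction l with
  | nil => simp [cost]
  | cons p l ih =>
    have h1 : cost (p :: l) = p.2 + cost l := by simp [cost]
    rw [h1, h p (List.mem_cons_self), ih fun q hq => h q (List.mem_cons_of_mem _ hq),
      List.length_cons]
    push_cast
    ring

lemma pow_halve {V W : Set G} (hsq : W * W ⊆ V) : ∀ s : ℕ, W ^ (2 * s) ⊆ V ^ s := by
  intro s
  induction s with
  | zero => simp
  | succ s ih =>
    have : 2 * (s + 1) = 2 * s + 2 := by ring
    rw [this, pow_add, pow_succ]
    calc W ^ (2*s) * W ^ 2 ⊆ V ^ s * (W * W) := by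
          rw [sq]; exact Set.mul_subset_mul ih subset_rfl
    _ ⊆ V ^ s * V := Set.mul_subset_mul subset_rfl hsq

lemma block (V : ℕ → Set G) (hone : ∀ j, 1 ∈ V j) (hsq : ∀ j, V (j+1) * V (j+1) ⊆ V j) :
    ∀ (D J t : ℕ) (l : List (G × ENNReal)),
      (∀ p ∈ l, ∃ j, J ≤ j ∧ j ≤ J + D ∧ p.1 ∈ V j ∧ p.2 = u j) →
      cost l < (t + 1 : ℕ) * u J → gprod l ∈ V J ^ (t + 1) := by
  intro D
  induction D with
  | zero =>
    intro J t l hl hc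
    have hVl : ∀ p ∈ l, p.1 ∈ V J := by
      intro p hp
      obtain ⟨j, h1, h2, h3, _⟩ := hl p hp
      have : j = J := le_antisymm (by omega) h1
      rwa [this] at h3
    have hcl : ∀ p ∈ l, p.2 = u J := by
      intro p hp
      obtain ⟨j, h1, h2, _, h4⟩ := hl p hp
      have : j = J := le_antisymm (by omega) h1
      rwa [this] at h4
    rw [cost_const hcl] at hc
    have hlen : l.length < t + 1 := by
      by_contra hcon
      push_neg at hcon
      exact absurd hc (not_lt.2 (mul_le_mul_left (by exact_mod_cast hcon) _))
    exact Set.pow_subset_pow_right (hone J) (by omega) (gprod_mem_pow hVl)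
  | succ D ih =>
    intro J t l hl hc
    classical
    set P : G × ENNReal → Bool := fun p => decide (p.2 = u J) with hP
    set l₀ := l.filter P with hl₀
    set l₁ := l.filter (fun p => !P p) with hl₁
    have hperm : (l₀ ++ l₁).Perm l := List.filter_append_perm P l
    have hcost : cost l = cost l₀ + cost l₁ := by
      have := (hperm.map Prod.snd).sum_eq
      simp only [cost] at *
      rw [← this, List.map_append, List.sum_append]
    have hprod : gprod l = gprod l₀ * gprod l₁ := by
      have := (hperm.map Prod.fst).prod_eq
      simp only [gprod] at *
      rw [← this, List.map_append, List.prod_append]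
    -- letters of l₀ are in V J with weight u J
    have hl₀mem : ∀ p ∈ l₀, p.1 ∈ V J ∧ p.2 = u J := by
      intro p hp
      rw [hl₀, List.mem_filter] at hp
      have hw : p.2 = u J := by simpa [hP] using hp.2
      obtain ⟨j, h1, h2, h3, h4⟩ := hl p hp.1
      have hj : j = J := by
        by_contra hne
        have hlt : J < j := lt_of_le_of_ne h1 (Ne.symm hne)
        have hltu := u_lt_of_gt hlt
        rw [← h4, hw] at hltu
        exact lt_irrefl _ hltu
      exact ⟨hj ▸ h3, hw⟩
    have hl₁mem : ∀ p ∈ l₁, ∃ j, J + 1 ≤ j ∧ j ≤ (J + 1) + D ∧ p.1 ∈ V j ∧ p.2 = u j := by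
      intro p hp
      rw [hl₁, List.mem_filter] at hp
      have hw : ¬ (p.2 = u J) := by simpa [hP] using hp.2
      obtain ⟨j, h1, h2, h3, h4⟩ := hl p hp.1
      have hj : J + 1 ≤ j := by
        rcases Nat.lt_or_ge J j with h | h
        · omega
        · exact absurd (by rw [h4, le_antisymm h h1]) hw
      exact ⟨j, hj, by omega, h3, h4⟩
    set k := l₀.length with hk
    have hc₀ : cost l₀ = (k : ℕ) * u J := cost_const fun p hp => (hl₀mem p hp).2
    have hklt : (k : ENNReal) * u J < ((t + 1 : ℕ) : ENNReal) * u J := by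
      calc (k : ENNReal) * u J = cost l₀ := hc₀.symm
      _ ≤ cost l := by rw [hcost]; exact le_self_add
      _ < _ := hc
    have hkt : k ≤ t := by
      have := (ENNReal.mul_lt_mul_iff_left (u_ne_zero J) (u_ne_top J)).1 hklt
      have : k < t + 1 := by exact_mod_cast this
      omega
    have hsplit : ((t + 1 : ℕ) : ENNReal) * u J
        = (k : ℕ) * u J + ((t + 1 - k : ℕ) : ENNReal) * u J := by
      rw [← add_mul]
      congr 1
      have : (k : ℕ) + (t + 1 - k) = t + 1 := by omega
      exact_mod_cast (congrArg (fun n : ℕ => (n : ENNReal)) this).symm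
    have hc₁ : cost l₁ < ((t + 1 - k : ℕ) : ENNReal) * u J := by
      rw [hcost, hsplit, hc₀] at hc
      exact (ENNReal.add_lt_add_iff_left
        (ENNReal.mul_ne_top (ENNReal.natCast_ne_top k) (u_ne_top J))).1 hc
    have hc₁' : cost l₁ < ((2 * (t - k) + 1 + 1 : ℕ) : ENNReal) * u (J + 1) := by
      have harith : ((t + 1 - k : ℕ) : ENNReal) * u J
          = ((2 * (t - k) + 1 + 1 : ℕ) : ENNReal) * u (J + 1) := by
        rw [u_succ J, ← mul_assoc]
        congr 1
        have : (2 * (t - k) + 1 + 1 : ℕ) = (t + 1 - k) * 2 := by omega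
        rw [this]
        push_cast
        ring
      rwa [harith] at hc₁
    have hgl₁ := ih (J + 1) (2 * (t - k) + 1) l₁ hl₁mem hc₁'
    have hgl₁' : gprod l₁ ∈ V J ^ (t - k + 1) := by
      have h2 : (2 * (t - k) + 1 + 1) = 2 * (t - k + 1) := by omega
      rw [h2] at hgl₁
      exact pow_halve (hsq J) (t - k + 1) hgl₁
    have hgl₀ : gprod l₀ ∈ V J ^ k := gprod_mem_pow fun p hp => (hl₀mem p hp).1
    rw [hprod]
    have hfin : V J ^ k * V J ^ (t - k + 1) = V J ^ (t + 1) := by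
      rw [← pow_add]
      congr 1
      omega
    rw [← hfin]
    exact Set.mul_mem_mul hgl₀ hgl₁'

lemma aletters (a : ℕ → G) (N : ℕ) :
    ∀ l : List (G × ENNReal),
      (∀ p ∈ l, ∃ m : ℕ, 1 ≤ m ∧ m < N ∧ (p.1 = a m ∨ p.1 = (a m)⁻¹) ∧ p.2 = (m : ENNReal)) →
      ∃ s : Fin N → ℤ, gprod l = ∏ i, a i.1 ^ s i ∧
        ((∑ i, i.1 * (s i).natAbs : ℕ) : ENNReal) ≤ cost l ∧
        ∀ i : Fin N, i.1 = 0 → s i = 0 := by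
  intro l
  induction l with
  | nil =>
    intro _
    exact ⟨0, by simp [gprod], by simp [cost], fun _ _ => rfl⟩
  | cons p l ih =>
    intro hmem
    obtain ⟨s, hsprod, hssum, hszero⟩ := ih fun q hq => hmem q (List.mem_cons_of_mem _ hq)
    obtain ⟨m, hm1, hmN, hform, hw⟩ := hmem p (List.mem_cons_self)
    set i₀ : Fin N := ⟨m, hmN⟩ with hi₀
    classical
    set ε : ℤ := if p.1 = a m then 1 else -1 with hε
    set s' : Fin N → ℤ := Function.update s i₀ (s i₀ + ε) with hs'
    have hpow : a m ^ ε = p.1 := by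
      rcases hform with h | h
      · rw [hε, if_pos h, zpow_one, h]
      · by_cases hc : p.1 = a m
        · rw [hε, if_pos hc, zpow_one, hc]
        · rw [hε, if_neg hc, zpow_neg, zpow_one, h]
    have hεabs : ε.natAbs = 1 := by
      rcases ite_eq_or_eq (p.1 = a m) (1 : ℤ) (-1) with h | h <;> rw [hε, h] <;> rfl
    refine ⟨s', ?_, ?_, ?_⟩
    · have hsplit' : ∏ i, a i.1 ^ s' i
          = a i₀.1 ^ (s i₀ + ε) * ∏ i ∈ Finset.univ.erase i₀, a i.1 ^ s i := by
        rw [← Finset.mul_prod_erase Finset.univ (fun i => a i.1 ^ s' i) (Finset.mem_univ i₀)]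
        congr 1
        · rw [hs', Function.update_self]
        · exact Finset.prod_congr rfl fun i hi =>
            congrArg _ (by rw [hs', Function.update_of_ne (Finset.ne_of_mem_erase hi)])
      have hsplit : ∏ i, a i.1 ^ s i
          = a i₀.1 ^ s i₀ * ∏ i ∈ Finset.univ.erase i₀, a i.1 ^ s i :=
        (Finset.mul_prod_erase Finset.univ (fun i => a i.1 ^ s i) (Finset.mem_univ i₀)).symm
      have : gprod (p :: l) = p.1 * gprod l := by simp [gprod]
      rw [this, hsprod, hsplit', hsplit, zpow_add, ← hpow]
      show a m ^ ε * (a m ^ s i₀ * _) = a m ^ s i₀ * a m ^ ε * _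
      rw [← mul_assoc, mul_comm (a m ^ ε) (a m ^ s i₀)]
    · have hcostc : cost (p :: l) = (m : ENNReal) + cost l := by simp [cost, hw]
      have hsum' : (∑ i, i.1 * (s' i).natAbs : ℕ) ≤ m + ∑ i, i.1 * (s i).natAbs := by
        have h1 : ∑ i, i.1 * (s' i).natAbs
            = m * (s i₀ + ε).natAbs + ∑ i ∈ Finset.univ.erase i₀, i.1 * (s i).natAbs := by
          rw [← Finset.add_sum_erase Finset.univ (fun i => i.1 * (s' i).natAbs)
            (Finset.mem_univ i₀)]
          congr 1
          · rw [hs', Function.update_self]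
          · exact Finset.sum_congr rfl fun i hi => by
              rw [hs', Function.update_of_ne (Finset.ne_of_mem_erase hi)]
        have h2 : ∑ i, i.1 * (s i).natAbs
            = m * (s i₀).natAbs + ∑ i ∈ Finset.univ.erase i₀, i.1 * (s i).natAbs :=
          (Finset.add_sum_erase Finset.univ (fun i => i.1 * (s i).natAbs)
            (Finset.mem_univ i₀)).symm
        rw [h1, h2]
        have : (s i₀ + ε).natAbs ≤ (s i₀).natAbs + 1 := by
          calc (s i₀ + ε).natAbs ≤ (s i₀).natAbs + ε.natAbs := Int.natAbs_add_le _ _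
          _ = (s i₀).natAbs + 1 := by rw [hεabs]
        have h3 : m * (s i₀ + ε).natAbs ≤ m * (s i₀).natAbs + m := by
          calc m * (s i₀ + ε).natAbs ≤ m * ((s i₀).natAbs + 1) := Nat.mul_le_mul_left m this
          _ = m * (s i₀).natAbs + m := by ring
        omega
      rw [hcostc]
      calc ((∑ i, i.1 * (s' i).natAbs : ℕ) : ENNReal)
          ≤ ((m + ∑ i, i.1 * (s i).natAbs : ℕ) : ENNReal) := by exact_mod_cast hsum'
      _ = (m : ENNReal) + ((∑ i, i.1 * (s i).natAbs : ℕ) : ENNReal) := by push_cast; rfl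
      _ ≤ (m : ENNReal) + cost l := add_le_add le_rfl hssum
    · intro i hi
      have hne : i ≠ i₀ := by
        intro h
        rw [h, hi₀] at hi
        simp only [Fin.val_mk] at hi
        omega
      rw [hs', Function.update_of_ne hne]
      exact hszero i hi

/-- Partial pseudonorm data. -/
def Good (H : Subgroup G) (ρ : G → ℝ) (M : Subgroup G) (φ : G → ℝ) : Prop :=
  H ≤ M ∧ (∀ g ∈ H, φ g = ρ g) ∧ φ 1 = 0 ∧ (∀ g ∈ M, φ g⁻¹ = φ g) ∧
    (∀ g h : G, g ∈ M → h ∈ M → φ (g * h) ≤ φ g + φ h)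

lemma Good.nonneg {H : Subgroup G} {ρ : G → ℝ} {M : Subgroup G} {φ : G → ℝ}
    (hG : Good H ρ M φ) : ∀ g ∈ M, 0 ≤ φ g := by
  intro g hg
  have h1 : φ (g * g⁻¹) ≤ φ g + φ g⁻¹ := hG.2.2.2.2 g g⁻¹ hg (inv_mem hg)
  rw [mul_inv_cancel, hG.2.2.1, hG.2.2.2.1 g hg] at h1
  linarith

lemma Good.pow_le {H : Subgroup G} {ρ : G → ℝ} {M : Subgroup G} {φ : G → ℝ}
    (hG : Good H ρ M φ) : ∀ z ∈ M, ∀ n : ℕ, φ (z ^ n) ≤ n * φ z := by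
  intro z hz n
  induction n with
  | zero => simp [hG.2.2.1]
  | succ n ih =>
    have : φ (z ^ n * z) ≤ φ (z ^ n) + φ z := hG.2.2.2.2 _ _ (pow_mem hz n) hz
    rw [← pow_succ] at this
    push_cast
    linarith

lemma Good.zpow_le {H : Subgroup G} {ρ : G → ℝ} {M : Subgroup G} {φ : G → ℝ}
    (hG : Good H ρ M φ) : ∀ z ∈ M, ∀ n : ℤ, φ (z ^ n) ≤ |n| * φ z := by
  intro z hz n
  rcases le_or_gt 0 n with h | h
  · lift n to ℕ using h
    rw [zpow_natCast]
    simpa using hG.pow_le z hz n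
  · have h1 : z ^ n = (z ^ (-n).toNat)⁻¹ := by
      rw [← zpow_natCast, Int.toNat_of_nonneg (by omega), zpow_neg, inv_inv]
    rw [h1, hG.2.2.2.1 _ (pow_mem hz _)]
    have h3 := hG.pow_le z hz (-n).toNat
    have h2 : ((-n).toNat : ℝ) = |(n : ℝ)| := by
      rw [abs_of_neg (show (n : ℝ) < 0 by exact_mod_cast h)]
      exact_mod_cast Int.toNat_of_nonneg (by omega : (0:ℤ) ≤ -n)
    push_cast
    rw [← h2]
    exact h3

/-- One-step extension. -/
lemma one_step {H : Subgroup G} {ρ : G → ℝ} {M : Subgroup G} {φ : G → ℝ}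
    (hG : Good H ρ M φ) (x : G) :
    ∃ (M' : Subgroup G) (φ' : G → ℝ), Good H ρ M' φ' ∧ M ≤ M' ∧ x ∈ M' ∧
      ∀ g ∈ M, φ' g = φ g := by
  classical
  by_cases hx : x ∈ M
  · exact ⟨M, φ, hG, le_rfl, hx, fun g _ => rfl⟩
  set c : ℝ :=
    if h : ∃ k : ℕ, 0 < k ∧ x ^ (k : ℤ) ∈ M then
      φ (x ^ ((Nat.find h : ℕ) : ℤ)) / (Nat.find h : ℝ) else 0 with hc
  have hc0 : 0 ≤ c := by
    rw [hc]
    split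
    · next h =>
      exact div_nonneg (hG.nonneg _ (Nat.find_spec h).2) (Nat.cast_nonneg _)
    · exact le_rfl
  have hcbound : ∀ n : ℤ, x ^ n ∈ M → φ (x ^ n) ≤ |(n : ℝ)| * c := by
    intro n hn
    rcases eq_or_ne n 0 with rfl | hn0
    · simp [hG.2.2.1]
    · have hex : ∃ k : ℕ, 0 < k ∧ x ^ (k : ℤ) ∈ M := by
        refine ⟨n.natAbs, by omega, ?_⟩
        rcases Int.natAbs_eq n with h | h
        · rwa [← h]
        · rw [show ((n.natAbs : ℤ)) = -n by omega, zpow_neg]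
          exact inv_mem hn
      rw [hc, dif_pos hex]
      obtain ⟨hm0, hmM⟩ := Nat.find_spec hex
      set m := Nat.find hex with hm
      -- m divides n
      have hdvd : (m : ℤ) ∣ n := by
        by_contra hnd
        have hr0 : n % (m : ℤ) ≠ 0 := fun h => hnd (Int.dvd_of_emod_eq_zero h)
        have hrlt : n % (m : ℤ) < m := Int.emod_lt_of_pos n (by exact_mod_cast hm0)
        have hrge : 0 ≤ n % (m : ℤ) := Int.emod_nonneg n (by exact_mod_cast hm0.ne')
        have hmfind : m = Nat.find hex := hm
        have hxr : x ^ (n % (m : ℤ)) ∈ M := by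
          have : n % (m : ℤ) = n - (m : ℤ) * (n / (m : ℤ)) := Int.emod_def n m
          rw [this, zpow_sub, zpow_mul]
          exact mul_mem hn (inv_mem (zpow_mem hmM _))
        have : (n % (m : ℤ)).toNat < m ∧ 0 < (n % (m : ℤ)).toNat ∧
            x ^ (((n % (m : ℤ)).toNat : ℕ) : ℤ) ∈ M := by
          refine ⟨by omega, by omega, ?_⟩
          rwa [Int.toNat_of_nonneg hrge]
        exact Nat.find_min hex (hmfind ▸ this.1) ⟨this.2.1, this.2.2⟩
      obtain ⟨q, hq⟩ := hdvd
      have hφm : φ (x ^ ((m : ℕ) : ℤ)) = (m : ℝ) * (φ (x ^ ((m : ℕ) : ℤ)) / m) := by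
        field_simp
      calc φ (x ^ n) = φ ((x ^ ((m : ℕ) : ℤ)) ^ q) := by rw [← zpow_mul, ← hq]
      _ ≤ |(q : ℝ)| * φ (x ^ ((m : ℕ) : ℤ)) := by
          have := hG.zpow_le _ hmM q
          calc φ ((x ^ ((m : ℕ) : ℤ)) ^ q) ≤ |q| * φ (x ^ ((m : ℕ) : ℤ)) := this
          _ = |(q : ℝ)| * φ (x ^ ((m : ℕ) : ℤ)) := by push_cast; rfl
      _ = |(n : ℝ)| * (φ (x ^ ((m : ℕ) : ℤ)) / m) := by
          rw [hq]
          push_cast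
          rw [abs_mul, abs_of_nonneg (by positivity : (0:ℝ) ≤ (m:ℝ))]
          field_simp
    -- end hcbound
  set M' : Subgroup G := M ⊔ Subgroup.zpowers x with hM'
  set RS : G → Set ℝ :=
    fun g => {r : ℝ | ∃ n : ℤ, ∃ h : G, h ∈ M ∧ g = x ^ n * h ∧ r = |(n : ℝ)| * c + φ h}
    with hRS
  have hRSnonneg : ∀ g, ∀ r ∈ RS g, 0 ≤ r := by
    rintro g r ⟨n, h, hh, -, rfl⟩
    have := hG.nonneg h hh
    positivity
  have hbdd : ∀ g, BddBelow (RS g) := fun g => ⟨0, fun r hr => hRSnonneg g r hr⟩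
  have hne : ∀ g ∈ M', (RS g).Nonempty := by
    intro g hg
    rw [hM', Subgroup.mem_sup] at hg
    obtain ⟨y, hy, z, hz, hyz⟩ := hg
    obtain ⟨n, rfl⟩ := Subgroup.mem_zpowers_iff.1 hz
    exact ⟨|(n : ℝ)| * c + φ y, n, y, hy, by rw [← hyz, mul_comm], rfl⟩
  set φ' : G → ℝ := fun g => sInf (RS g) with hφ'
  have hle : ∀ (g : G) (n : ℤ) (h : G), h ∈ M → g = x ^ n * h →
      φ' g ≤ |(n : ℝ)| * c + φ h := by
    intro g n h hh hgh
    exact csInf_le (hbdd g) ⟨n, h, hh, hgh, rfl⟩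
  have hagree : ∀ g ∈ M, φ' g = φ g := by
    intro g hg
    refine le_antisymm (by simpa [hG.2.2.1] using hle g 0 g hg (by simp)) ?_
    refine le_csInf (hne g (Subgroup.mem_sup_left hg)) ?_
    rintro r ⟨n, h, hh, hgh, rfl⟩
    have hxn : x ^ n ∈ M := by
      have : x ^ n = g * h⁻¹ := by rw [hgh, mul_assoc, mul_inv_cancel, mul_one]
      rw [this]; exact mul_mem hg (inv_mem hh)
    calc φ g = φ (x ^ n * h) := by rw [hgh]
    _ ≤ φ (x ^ n) + φ h := hG.2.2.2.2 _ _ hxn hh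
    _ ≤ |(n : ℝ)| * c + φ h := by linarith [hcbound n hxn]
  have hsym : ∀ g ∈ M', φ' g⁻¹ ≤ φ' g := by
    intro g hg
    refine le_csInf (hne g hg) ?_
    rintro r ⟨n, h, hh, hgh, rfl⟩
    have : φ' g⁻¹ ≤ |((-n : ℤ) : ℝ)| * c + φ h⁻¹ :=
      hle g⁻¹ (-n) h⁻¹ (inv_mem hh) (by rw [hgh, mul_inv, zpow_neg])
    rw [hG.2.2.2.1 h hh] at this
    simpa using this
  have hM'inv : ∀ g ∈ M', g⁻¹ ∈ M' := fun g hg => inv_mem hg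
  refine ⟨M', φ', ⟨le_trans hG.1 le_sup_left, ?_, ?_, ?_, ?_⟩, le_sup_left, ?_, hagree⟩
  · intro g hg
    rw [hagree g (hG.1 hg)]
    exact hG.2.1 g hg
  · rw [hagree 1 (one_mem M), hG.2.2.1]
  · intro g hg
    exact le_antisymm (hsym g hg) (by simpa using hsym g⁻¹ (hM'inv g hg))
  · intro g₁ g₂ hg₁ hg₂
    have key : ∀ r₁ ∈ RS g₁, ∀ r₂ ∈ RS g₂, φ' (g₁ * g₂) ≤ r₁ + r₂ := by
      rintro r₁ ⟨n₁, h₁, hh₁, hgh₁, rfl⟩ r₂ ⟨n₂, h₂, hh₂, hgh₂, rfl⟩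
      have hrep : g₁ * g₂ = x ^ (n₁ + n₂) * (h₁ * h₂) := by
        rw [hgh₁, hgh₂, zpow_add]
        exact mul_mul_mul_comm _ _ _ _
      calc φ' (g₁ * g₂) ≤ |((n₁ + n₂ : ℤ) : ℝ)| * c + φ (h₁ * h₂) :=
            hle _ _ _ (mul_mem hh₁ hh₂) hrep
      _ ≤ (|(n₁ : ℝ)| + |(n₂ : ℝ)|) * c + (φ h₁ + φ h₂) := by
          have habs : |((n₁ + n₂ : ℤ) : ℝ)| ≤ |(n₁ : ℝ)| + |(n₂ : ℝ)| := by
            push_cast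
            exact abs_add_le _ _
          have := hG.2.2.2.2 h₁ h₂ hh₁ hh₂
          nlinarith [mul_le_mul_of_nonneg_right habs hc0]
      _ = (|(n₁ : ℝ)| * c + φ h₁) + (|(n₂ : ℝ)| * c + φ h₂) := by ring
    have step1 : ∀ r₁ ∈ RS g₁, φ' (g₁ * g₂) - r₁ ≤ φ' g₂ :=
      fun r₁ hr₁ => le_csInf (hne g₂ hg₂) fun r₂ hr₂ => by
        linarith [key r₁ hr₁ r₂ hr₂]
    have step2 : φ' (g₁ * g₂) - φ' g₂ ≤ φ' g₁ :=
      le_csInf (hne g₁ hg₁) fun r₁ hr₁ => by linarith [step1 r₁ hr₁]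
    linarith
  · exact Subgroup.mem_sup_right (Subgroup.mem_zpowers x)


def graph (M : Subgroup G) (φ : G → ℝ) : Set (G × ℝ) := {q | q.1 ∈ M ∧ q.2 = φ q.1}

lemma extension (H : Subgroup G) (ρ : G → ℝ)
    (h1 : ρ 1 = 0) (hsym : ∀ g, ρ g⁻¹ = ρ g)
    (hsub : ∀ g h : G, g ∈ H → h ∈ H → ρ (g * h) ≤ ρ g + ρ h) :
    ∃ f : G → ℝ, f 1 = 0 ∧ (∀ g, f g⁻¹ = f g) ∧ (∀ g h : G, f (g * h) ≤ f g + f h) ∧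
      ∀ g ∈ H, f g = ρ g := by
  classical
  set 𝒮 : Set (Set (G × ℝ)) :=
    {Γ | ∃ M φ, Good H ρ M φ ∧ Γ = graph M φ} with h𝒮
  have hchain : ∀ c ⊆ 𝒮, IsChain (· ⊆ ·) c → c.Nonempty →
      ∃ ub ∈ 𝒮, ∀ s ∈ c, s ⊆ ub := by
    intro c hc hchain hcne
    obtain ⟨Γ₀, hΓ₀c⟩ := hcne
    obtain ⟨M₀, φ₀, hG₀, hΓ₀⟩ := hc hΓ₀c
    set U : Set (G × ℝ) := ⋃₀ c with hU
    -- functionality of U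
    have hfun : ∀ g r r', (g, r) ∈ U → (g, r') ∈ U → r = r' := by
      rintro g r r' ⟨Γ₁, hΓ₁c, h₁⟩ ⟨Γ₂, hΓ₂c, h₂⟩
      rcases hchain.total hΓ₁c hΓ₂c with h | h
      · obtain ⟨M₂, φ₂, _, rfl⟩ := hc hΓ₂c
        exact ((h h₁).2).trans h₂.2.symm
      · obtain ⟨M₁, φ₁, _, rfl⟩ := hc hΓ₁c
        exact (h₁.2).trans ((h h₂).2).symm
    have hmemM : ∀ g r, (g, r) ∈ U → ∀ h : G, (∃ Γ ∈ c, (g, r) ∈ Γ ∧ True) → True :=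
      fun _ _ _ _ _ => trivial
    -- subgroup
    have hmul : ∀ g h : G, (∃ r, (g, r) ∈ U) → (∃ r, (h, r) ∈ U) →
        ∃ r, (g * h, r) ∈ U := by
      rintro g h ⟨r, Γ₁, hΓ₁c, h₁⟩ ⟨r', Γ₂, hΓ₂c, h₂⟩
      rcases hchain.total hΓ₁c hΓ₂c with hss | hss
      · obtain ⟨M₂, φ₂, hG₂, rfl⟩ := hc hΓ₂c
        exact ⟨φ₂ (g * h), Set.mem_sUnion.2 ⟨graph M₂ φ₂, hΓ₂c,
          mul_mem (hss h₁).1 h₂.1, rfl⟩⟩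
      · obtain ⟨M₁, φ₁, hG₁, rfl⟩ := hc hΓ₁c
        exact ⟨φ₁ (g * h), Set.mem_sUnion.2 ⟨graph M₁ φ₁, hΓ₁c,
          mul_mem h₁.1 (hss h₂).1, rfl⟩⟩
    have hinv : ∀ g : G, (∃ r, (g, r) ∈ U) → ∃ r, (g⁻¹, r) ∈ U := by
      rintro g ⟨r, Γ₁, hΓ₁c, h₁⟩
      obtain ⟨M₁, φ₁, hG₁, rfl⟩ := hc hΓ₁c
      exact ⟨φ₁ g⁻¹, Set.mem_sUnion.2 ⟨graph M₁ φ₁, hΓ₁c, inv_mem h₁.1, rfl⟩⟩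
    set MU : Subgroup G :=
      { carrier := {g | ∃ r, (g, r) ∈ U}
        one_mem' := ⟨φ₀ 1, Set.mem_sUnion.2 ⟨Γ₀, hΓ₀c, by rw [hΓ₀]; exact ⟨one_mem M₀, rfl⟩⟩⟩
        mul_mem' := fun ha hb => hmul _ _ ha hb
        inv_mem' := fun ha => hinv _ ha } with hMU
    set φU : G → ℝ := fun g => if h : ∃ r, (g, r) ∈ U then h.choose else 0 with hφU
    have hφUval : ∀ g r, (g, r) ∈ U → φU g = r := by
      intro g r hgr
      have hex : ∃ r, (g, r) ∈ U := ⟨r, hgr⟩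
      rw [hφU]
      simp only [dif_pos hex]
      exact hfun g _ r hex.choose_spec hgr
    -- values via any member graph
    have hval : ∀ (Γ) (_ : Γ ∈ c) (M₁ : Subgroup G) (φ₁ : G → ℝ), Γ = graph M₁ φ₁ →
        ∀ g ∈ M₁, φU g = φ₁ g := by
      intro Γ hΓc M₁ φ₁ hΓ g hg
      exact hφUval g (φ₁ g) (Set.mem_sUnion.2 ⟨Γ, hΓc, by rw [hΓ]; exact ⟨hg, rfl⟩⟩)
    have hGU : Good H ρ MU φU := by
      refine ⟨?_, ?_, ?_, ?_, ?_⟩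
      · intro g hg
        exact ⟨φ₀ g, Set.mem_sUnion.2 ⟨Γ₀, hΓ₀c, by rw [hΓ₀]; exact ⟨hG₀.1 hg, rfl⟩⟩⟩
      · intro g hg
        rw [hval Γ₀ hΓ₀c M₀ φ₀ hΓ₀ g (hG₀.1 hg)]
        exact hG₀.2.1 g hg
      · rw [hval Γ₀ hΓ₀c M₀ φ₀ hΓ₀ 1 (one_mem M₀)]
        exact hG₀.2.2.1
      · rintro g ⟨r, Γ₁, hΓ₁c, h₁⟩
        obtain ⟨M₁, φ₁, hG₁, rfl⟩ := hc hΓ₁c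
        rw [hval _ hΓ₁c M₁ φ₁ rfl g h₁.1, hval _ hΓ₁c M₁ φ₁ rfl g⁻¹ (inv_mem h₁.1)]
        exact hG₁.2.2.2.1 g h₁.1
      · rintro g h ⟨r, Γ₁, hΓ₁c, h₁⟩ ⟨r', Γ₂, hΓ₂c, h₂⟩
        rcases hchain.total hΓ₁c hΓ₂c with hss | hss
        · obtain ⟨M₂, φ₂, hG₂, rfl⟩ := hc hΓ₂c
          have hg : g ∈ M₂ := (hss h₁).1
          have hh : h ∈ M₂ := h₂.1
          rw [hval _ hΓ₂c M₂ φ₂ rfl g hg, hval _ hΓ₂c M₂ φ₂ rfl h hh,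
            hval _ hΓ₂c M₂ φ₂ rfl (g * h) (mul_mem hg hh)]
          exact hG₂.2.2.2.2 g h hg hh
        · obtain ⟨M₁, φ₁, hG₁, rfl⟩ := hc hΓ₁c
          have hg : g ∈ M₁ := h₁.1
          have hh : h ∈ M₁ := (hss h₂).1
          rw [hval _ hΓ₁c M₁ φ₁ rfl g hg, hval _ hΓ₁c M₁ φ₁ rfl h hh,
            hval _ hΓ₁c M₁ φ₁ rfl (g * h) (mul_mem hg hh)]
          exact hG₁.2.2.2.2 g h hg hh
    refine ⟨U, ⟨MU, φU, hGU, ?_⟩, fun s hs => Set.subset_sUnion_of_mem hs⟩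
    ext ⟨g, r⟩
    constructor
    · intro hgr
      exact ⟨⟨r, hgr⟩, (hφUval g r hgr).symm⟩
    · rintro ⟨⟨r', hgr'⟩, hr⟩
      have h2 := hφUval g r' hgr'
      have : r = r' := by rw [show r = φU g from hr, h2]
      rw [this]
      exact hgr'
  -- base element
  have hbase : graph H ρ ∈ 𝒮 := ⟨H, ρ, ⟨le_rfl, fun _ _ => rfl, h1,
    fun g _ => hsym g, hsub⟩, rfl⟩
  obtain ⟨m, _, hmax⟩ := zorn_subset_nonempty 𝒮 hchain _ hbase
  obtain ⟨M, φ, hGM, rfl⟩ := hmax.prop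
  have hMtop : ∀ x : G, x ∈ M := by
    intro x
    by_contra hx
    obtain ⟨M', φ', hG', hMM', hxM', hagree⟩ := one_step hGM x
    have hsub' : graph M φ ⊆ graph M' φ' := by
      rintro ⟨g, r⟩ ⟨hg, hr⟩
      exact ⟨hMM' hg, by rw [hr, hagree g hg]⟩
    have hsub2 := hmax.2 ⟨M', φ', hG', rfl⟩ hsub'
    have hxmem : ((x, φ' x) : G × ℝ) ∈ graph M' φ' := ⟨hxM', rfl⟩
    exact hx (hsub2 hxmem).1
  exact ⟨φ, hGM.2.2.1, fun g => hGM.2.2.2.1 g (hMtop g),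
    fun g h => hGM.2.2.2.2 g h (hMtop g) (hMtop h), hGM.2.1⟩


-- small helpers
lemma single_le_cost {l : List (G × ENNReal)} {p : G × ENNReal} (hp : p ∈ l) :
    p.2 ≤ cost l := by
  induction l with
  | nil => cases hp
  | cons q l ih =>
    rcases List.mem_cons.1 hp with rfl | hp'
    · show p.2 ≤ (List.map Prod.snd (p :: l)).sum
      simp only [List.map_cons, List.sum_cons]
      exact le_self_add
    · show p.2 ≤ (List.map Prod.snd (q :: l)).sum
      simp only [List.map_cons, List.sum_cons]
      exact le_add_left (ih hp')

lemma cost_split (P : G × ENNReal → Bool) (l : List (G × ENNReal)) :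
    cost l = cost (l.filter P) + cost (l.filter fun p => !P p) := by
  have hperm := List.filter_append_perm P l
  have := (hperm.map Prod.snd).sum_eq
  simp only [cost] at *
  rw [← this, List.map_append, List.sum_append]

lemma gprod_split (P : G × ENNReal → Bool) (l : List (G × ENNReal)) :
    gprod l = gprod (l.filter P) * gprod (l.filter fun p => !P p) := by
  have hperm := List.filter_append_perm P l
  have := (hperm.map Prod.fst).prod_eq
  simp only [gprod] at *
  rw [← this, List.map_append, List.prod_append]

lemma levels_bounded {Q : ℕ → G × ENNReal → Prop} :
    ∀ l : List (G × ENNReal), (∀ p ∈ l, ∃ j, Q j p) →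
      ∃ D, ∀ p ∈ l, ∃ j, j ≤ D ∧ Q j p := by
  intro l
  induction l with
  | nil => exact fun _ => ⟨0, fun p hp => absurd hp List.not_mem_nil⟩
  | cons q l ih =>
    intro h
    obtain ⟨D, hD⟩ := ih fun p hp => h p (List.mem_cons_of_mem _ hp)
    obtain ⟨j₀, hj₀⟩ := h q (List.mem_cons_self)
    refine ⟨max D j₀, fun p hp => ?_⟩
    rcases List.mem_cons.1 hp with rfl | hp'
    · exact ⟨j₀, le_max_right _ _, hj₀⟩
    · obtain ⟨j, hj, hQ⟩ := hD p hp'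
      exact ⟨j, le_trans hj (le_max_left _ _), hQ⟩

lemma pow_compact [TopologicalSpace G] [IsTopologicalGroup G] {K : Set G} (hK : IsCompact K) :
    ∀ m : ℕ, IsCompact (K ^ m) := by
  intro m
  induction m with
  | zero =>
    rw [pow_zero]
    have : (1 : Set G) = {(1 : G)} := rfl
    rw [this]
    exact isCompact_singleton
  | succ m ih => rw [pow_succ]; exact ih.mul hK


end RCCB

open RCCB in
theorem relativelyCompact_iff_coarselyBounded_aux
    {G : Type*} [CommGroup G] [TopologicalSpace G] [IsTopologicalGroup G]
    [LocallyCompactSpace G] [T2Space G] (A : Set G) :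
    IsCompact (closure A) ↔
      (∀ f : G → ℝ, Continuous f → f 1 = 0 → (∀ g : G, f g⁻¹ = f g) →
        (∀ g h : G, f (g * h) ≤ f g + f h) → Bornology.IsBounded (f '' A)) := by
  constructor
  · intro hcpt f hf _ _ _
    exact ((hcpt.image hf).isBounded).subset (Set.image_mono subset_closure)
  · intro hcb
    by_contra hnc
    -- compact symmetric neighborhood K of 1
    obtain ⟨K₀, hK₀c, hK₀n⟩ := exists_compact_mem_nhds (1 : G)
    set K : Set G := K₀ ∩ K₀⁻¹ with hK
    have hKc : IsCompact K := hK₀c.inter_right (hK₀c.inv.isClosed)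
    have hKn : K ∈ nhds (1 : G) := by
      refine Filter.inter_mem hK₀n ?_
      have : K₀⁻¹ = Inv.inv ⁻¹' K₀ := by ext x; simp [Set.mem_inv]
      rw [this]
      exact (continuous_inv.continuousAt (x := (1:G))).preimage_mem_nhds (by simpa using hK₀n)
    have hKsym : K⁻¹ = K := by
      rw [hK, Set.inter_inv, inv_inv, Set.inter_comm]
    have hK1 : (1 : G) ∈ K := mem_of_mem_nhds hKn
    -- chain of symmetric neighborhoods
    have hstep : ∀ U : {s : Set G // s ∈ nhds (1:G) ∧ s⁻¹ = s},
        ∃ W : {s : Set G // s ∈ nhds (1:G) ∧ s⁻¹ = s}, W.1 * W.1 ⊆ U.1 := by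
      rintro ⟨U, hU, -⟩
      obtain ⟨V₁, hV₁o, hV₁1, hV₁m⟩ := exists_open_nhds_one_mul_subset hU
      refine ⟨⟨V₁ ∩ V₁⁻¹, ?_, ?_⟩, ?_⟩
      · exact Filter.inter_mem (hV₁o.mem_nhds hV₁1)
          ((hV₁o.inv.mem_nhds) (by simpa using hV₁1))
      · rw [Set.inter_inv, inv_inv, Set.inter_comm]
      · exact fun x hx => hV₁m (Set.mul_subset_mul inter_subset_left inter_subset_left hx)
    choose step hstepspec using hstep
    set Vs : ℕ → {s : Set G // s ∈ nhds (1:G) ∧ s⁻¹ = s} :=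
      fun n => Nat.rec ⟨K, hKn, hKsym⟩ (fun _ p => step p) n with hVs
    set V : ℕ → Set G := fun n => (Vs n).1 with hV
    have hV0 : V 0 = K := rfl
    have hVn : ∀ j, V j ∈ nhds (1:G) := fun j => (Vs j).2.1
    have hVsym : ∀ j, (V j)⁻¹ = V j := fun j => (Vs j).2.2
    have hVone : ∀ j, (1:G) ∈ V j := fun j => mem_of_mem_nhds (hVn j)
    have hVsq : ∀ j, V (j+1) * V (j+1) ⊆ V j := fun j => hstepspec (Vs j)
    -- key escape fact
    have key : ∀ F : Set G, F.Finite → ∀ m : ℕ, ∃ x, x ∈ A ∧ x ∉ F * K ^ m := by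
      intro F hF m
      by_contra hcon
      push_neg at hcon
      have hsub : A ⊆ F * K ^ m := fun x hx => by
        by_contra hxn
        exact hxn (hcon x hx)
      have hcpt : IsCompact (F * K ^ m) := hF.isCompact.mul (pow_compact hKc m)
      exact hnc (hcpt.of_isClosed_subset isClosed_closure
        (closure_minimal hsub hcpt.isClosed))
    -- recursive choice of the sequence a
    classical
    set Φset : List G → (n : ℕ) → Set G :=
      fun L n => (fun s : Fin n → ℤ => ∏ i : Fin n, (L.getD i.1 1) ^ (s i)) ''
        {s | ∀ i, (s i).natAbs ≤ n} with hΦset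
    have hΦfin : ∀ L n, (Φset L n).Finite := by
      intro L n
      apply Set.Finite.image
      refine Set.Finite.subset (Set.Finite.pi fun _ : Fin n => Set.finite_Icc (-(n:ℤ)) n) ?_
      intro s hs i _
      have := hs i
      simp only [Set.mem_Icc]
      omega
    have key2 : ∀ (L : List G) (n : ℕ), ∃ x, x ∈ A ∧ x ∉ Φset L n * K ^ (n+1) :=
      fun L n => key _ (hΦfin L n) (n+1)
    choose pick hpickA hpickN using key2
    set chain : ℕ → List G :=
      fun n => Nat.rec ([] : List G) (fun m L => L ++ [pick L m]) n with hchain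
    have hchainsucc : ∀ n, chain (n+1) = chain n ++ [pick (chain n) n] := fun n => rfl
    have hchainlen : ∀ n, (chain n).length = n := by
      intro n
      induction n with
      | zero => rfl
      | succ n ih => rw [hchainsucc]; simp [ih]
    set a : ℕ → G := fun n => pick (chain n) n with ha
    have hgetD : ∀ n, ∀ i < n, (chain n).getD i 1 = a i := by
      intro n
      induction n with
      | zero => omega
      | succ n ih =>
        intro i hi
        rw [hchainsucc]
        rcases Nat.lt_or_ge i n with h | h
        · rw [List.getD_append _ _ _ i (by rw [hchainlen]; exact h)]
          exact ih i h
        · have hieq : i = n := by omega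
          subst hieq
          rw [List.getD_append_right _ _ _ _ (by rw [hchainlen])]
          simp [hchainlen, ha]
    have hAa : ∀ n, a n ∈ A := fun n => hpickA (chain n) n
    have havoid : ∀ n, a n ∉ Φset (chain n) n * K ^ (n+1) := fun n => hpickN (chain n) n
    have hΦeq : ∀ n, Φset (chain n) n =
        (fun s : Fin n → ℤ => ∏ i, a i.1 ^ s i) '' {s | ∀ i, (s i).natAbs ≤ n} := by
      intro n
      refine Set.image_congr fun s _ => ?_
      exact Finset.prod_congr rfl fun i _ => by rw [hgetD n i.1 i.2]
    -- letters
    set S : Set (G × ENNReal) := {p | (∃ j, p.1 ∈ V j ∧ p.2 = u j) ∨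
      (∃ m : ℕ, 1 ≤ m ∧ (p.1 = a m ∨ p.1 = (a m)⁻¹) ∧ p.2 = (m : ENNReal))} with hS
    have hSsym : ∀ p ∈ S, ((p.1)⁻¹, p.2) ∈ S := by
      rintro p (⟨j, hpv, hpw⟩ | ⟨m, hm1, hform, hw⟩)
      · exact Or.inl ⟨j, by rw [← hVsym j]; exact Set.inv_mem_inv.2 hpv, hpw⟩
      · refine Or.inr ⟨m, hm1, ?_, hw⟩
        rcases hform with h | h
        · exact Or.inr (by rw [h])
        · exact Or.inl (by rw [h, inv_inv])
    set ν : G → ENNReal := nu S with hν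
    have hνa_le : ∀ N : ℕ, 1 ≤ N → ν (a N) ≤ N := by
      intro N hN
      refine nu_le [(a N, (N : ENNReal))] ?_ (by simp [gprod]) |>.trans ?_
      · intro p hp
        rw [List.mem_singleton] at hp
        subst hp
        exact Or.inr ⟨N, hN, Or.inl rfl, rfl⟩
      · simp [cost]
    have hνV : ∀ j, ∀ v ∈ V j, ν v ≤ u j := by
      intro j v hv
      refine nu_le [(v, u j)] ?_ (by simp [gprod]) |>.trans (by simp [cost])
      intro p hp
      rw [List.mem_singleton] at hp
      subst hp
      exact Or.inl ⟨j, hv, rfl⟩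
    have hνa_ge : ∀ N : ℕ, 1 ≤ N → (N : ENNReal) ≤ ν (a N) := by
      intro N hN
      refine le_nu fun l hl hg => ?_
      by_contra hlt
      push_neg at hlt
      set P : G × ENNReal → Bool := fun p => decide (∃ j, p.1 ∈ V j ∧ p.2 = u j) with hP
      set lv := l.filter P with hlv
      set la := l.filter (fun p => !P p) with hla
      have hcsplit := cost_split P l
      have hgsplit := gprod_split P l
      -- v-part
      have hv_letters : ∀ p ∈ lv, ∃ j, p.1 ∈ V j ∧ p.2 = u j := by
        intro p hp
        rw [hlv, List.mem_filter] at hp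
        exact of_decide_eq_true hp.2
      obtain ⟨D, hD⟩ := levels_bounded lv hv_letters
      have hcostlv : cost lv < ((N + 1 : ℕ) : ENNReal) * u 0 := by
        have h1 : cost lv ≤ cost l := by rw [hcsplit]; exact le_self_add
        have h2 : (N : ENNReal) < ((N + 1 : ℕ) : ENNReal) * u 0 := by
          rw [show u 0 = 1 from by simp [u], mul_one]
          exact_mod_cast Nat.lt_succ_self N
        exact lt_of_le_of_lt (lt_of_le_of_lt h1 hlt).le h2
      have hgv : gprod lv ∈ K ^ (N + 1) := by
        rw [← hV0]
        refine block V hVone hVsq D 0 N lv ?_ hcostlv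
        intro p hp
        obtain ⟨j, hjD, hjv, hjw⟩ := hD p hp
        exact ⟨j, Nat.zero_le j, by omega, hjv, hjw⟩
      -- a-part
      have ha_letters : ∀ p ∈ la,
          ∃ m : ℕ, 1 ≤ m ∧ m < N ∧ (p.1 = a m ∨ p.1 = (a m)⁻¹) ∧ p.2 = (m : ENNReal) := by
        intro p hp
        rw [hla, List.mem_filter] at hp
        have hnotv : ¬ (∃ j, p.1 ∈ V j ∧ p.2 = u j) := by
          have := hp.2
          simp only [Bool.not_eq_true'] at this
          exact of_decide_eq_false this
        rcases hl p hp.1 with h | ⟨m, hm1, hform, hw⟩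
        · exact absurd h hnotv
        · refine ⟨m, hm1, ?_, hform, hw⟩
          have hmle : (m : ENNReal) ≤ cost l := hw ▸ single_le_cost hp.1
          exact_mod_cast lt_of_le_of_lt hmle hlt
      obtain ⟨s, hsp, hss, hsz⟩ := aletters a N la ha_letters
      have hsumlt : (∑ i, i.1 * (s i).natAbs) < N := by
        have h1 : cost la ≤ cost l := by rw [hcsplit]; exact le_add_self
        exact_mod_cast lt_of_le_of_lt (hss.trans h1) hlt
      have hsbound : ∀ i : Fin N, (s i).natAbs ≤ N := by
        intro i
        rcases Nat.eq_zero_or_pos i.1 with h0 | h0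
        · rw [hsz i h0]; simp
        · have h1 : i.1 * (s i).natAbs ≤ ∑ j, j.1 * (s j).natAbs :=
            Finset.single_le_sum (f := fun j : Fin N => j.1 * (s j).natAbs)
              (fun _ _ => Nat.zero_le _) (Finset.mem_univ i)
          have h2 : (s i).natAbs ≤ i.1 * (s i).natAbs := Nat.le_mul_of_pos_left _ h0
          omega
      have hga : gprod la ∈ Φset (chain N) N := by
        rw [hΦeq N]
        exact ⟨s, hsbound, hsp.symm⟩
      refine havoid N ?_
      have : a N = gprod la * gprod lv := by rw [← hg, hgsplit, mul_comm]
      rw [this]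
      exact Set.mul_mem_mul hga hgv
    -- the subgroup of finite norm
    set H₁ : Subgroup G :=
      { carrier := {g | ν g ≠ ⊤}
        one_mem' := by show ν 1 ≠ ⊤; rw [hν, nu_one]; exact ENNReal.zero_ne_top
        mul_mem' := fun {x y} hx hy => by
          show ν (x * y) ≠ ⊤
          exact ne_top_of_le_ne_top (ENNReal.add_ne_top.2 ⟨hx, hy⟩) (nu_mul S x y)
        inv_mem' := fun {x} hx => by
          show ν x⁻¹ ≠ ⊤
          rw [hν, nu_inv_eq S hSsym]
          exact hx } with hH₁
    have hmemH₁ : ∀ g : G, g ∈ H₁ ↔ ν g ≠ ⊤ := fun g => Iff.rfl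
    set ρ : G → ℝ := fun g => (ν g).toReal with hρ
    have hρ1 : ρ 1 = 0 := by rw [hρ]; simp [hν, nu_one]
    have hρsym : ∀ g, ρ g⁻¹ = ρ g := fun g => by
      rw [hρ]; simp only [hν, nu_inv_eq S hSsym]
    have hρsub : ∀ g h : G, g ∈ H₁ → h ∈ H₁ → ρ (g * h) ≤ ρ g + ρ h := by
      intro g h hg hh
      rw [hmemH₁] at hg hh
      calc (ν (g * h)).toReal ≤ (ν g + ν h).toReal :=
            ENNReal.toReal_mono (ENNReal.add_ne_top.2 ⟨hg, hh⟩) (nu_mul S g h)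
      _ = (ν g).toReal + (ν h).toReal := ENNReal.toReal_add hg hh
    obtain ⟨f, hf1, hfsym, hfsub, hfH⟩ := extension H₁ ρ hρ1 hρsym hρsub
    have hVH₁ : ∀ j, ∀ v ∈ V j, v ∈ H₁ := fun j v hv =>
      (hmemH₁ v).2 (ne_top_of_le_ne_top (u_ne_top j) (hνV j v hv))
    have haH₁ : ∀ N : ℕ, 1 ≤ N → a N ∈ H₁ := fun N hN =>
      (hmemH₁ _).2 (ne_top_of_le_ne_top (ENNReal.natCast_ne_top N) (hνa_le N hN))
    have hfsmall : ∀ j, ∀ v ∈ V j, f v ≤ ((2:ℝ)⁻¹) ^ j := by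
      intro j v hv
      rw [hfH v (hVH₁ j v hv)]
      calc (ν v).toReal ≤ (u j).toReal := ENNReal.toReal_mono (u_ne_top j) (hνV j v hv)
      _ = ((2:ℝ)⁻¹) ^ j := by
          rw [u, ENNReal.toReal_pow, ENNReal.toReal_inv]
          norm_num
    have hfnn : ∀ g : G, 0 ≤ f g := by
      intro g
      have h1 : f (g * g⁻¹) ≤ f g + f g⁻¹ := hfsub g g⁻¹
      rw [mul_inv_cancel, hf1, hfsym] at h1
      linarith
    have hcont : Continuous f := by
      rw [continuous_iff_continuousAt]
      intro g
      rw [ContinuousAt, Metric.tendsto_nhds]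
      intro ε hε
      obtain ⟨j, hj⟩ := exists_pow_lt_of_lt_one hε (by norm_num : (2:ℝ)⁻¹ < 1)
      have hnb : {x | g⁻¹ * x ∈ V j} ∈ nhds g := by
        have hc : ContinuousAt (fun x : G => g⁻¹ * x) g :=
          (continuous_const.mul continuous_id).continuousAt
        have := hc.preimage_mem_nhds (by simpa using hVn j)
        simpa [Set.preimage] using this
      filter_upwards [hnb] with x hx
      have hfx : f x ≤ f g + f (g⁻¹ * x) := by
        have := hfsub g (g⁻¹ * x)
        rwa [mul_inv_cancel_left] at this
      have hfg : f g ≤ f x + f (g⁻¹ * x) := by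
        have h2 := hfsub x (x⁻¹ * g)
        rw [mul_inv_cancel_left] at h2
        have h3 : x⁻¹ * g = (g⁻¹ * x)⁻¹ := by rw [mul_inv_rev, inv_inv]
        rwa [h3, hfsym] at h2
      have hsmall : f (g⁻¹ * x) ≤ (2⁻¹:ℝ) ^ j := hfsmall j _ hx
      rw [Real.dist_eq, abs_sub_lt_iff]
      constructor <;> linarith
    have hB := hcb f hcont hf1 hfsym hfsub
    rw [isBounded_iff_forall_norm_le] at hB
    obtain ⟨C, hC⟩ := hB
    obtain ⟨N, hN⟩ := exists_nat_gt (max C 0)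
    have hN1 : 1 ≤ N := by
      have h0 : (0:ℝ) < N := lt_of_le_of_lt (le_max_right C 0) hN
      exact_mod_cast Nat.one_le_iff_ne_zero.2 (by exact_mod_cast h0.ne')
    have hfa : f (a N) = N := by
      rw [hfH (a N) (haH₁ N hN1)]
      have hval : ν (a N) = N := le_antisymm (hνa_le N hN1) (hνa_ge N hN1)
      rw [hρ]
      simp [hval]
    have hCa := hC (f (a N)) ⟨a N, hAa N, rfl⟩
    rw [hfa, Real.norm_eq_abs, abs_of_nonneg (by positivity)] at hCa
    have : C < (N:ℝ) := lt_of_le_of_lt (le_max_left C 0) hN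
    linarith



/-- A pseudonorm on a topological group `G` is a function `f : G → ℝ` with `f 1 = 0`,
`f g⁻¹ = f g` and `f (g * h) ≤ f g + f h`.  A set `A ⊆ G` is coarsely bounded if every
continuous pseudonorm maps it onto a bounded subset of `ℝ`. -/
def CoarselyBounded {G : Type*} [Group G] [TopologicalSpace G] (A : Set G) : Prop :=
  ∀ f : G → ℝ, Continuous f → f 1 = 0 → (∀ g : G, f g⁻¹ = f g) →
    (∀ g h : G, f (g * h) ≤ f g + f h) → Bornology.IsBounded (f '' A)

/-- In a locally compact Hausdorff abelian topological group, a subset is relatively compact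
if and only if it is coarsely bounded. -/
theorem relativelyCompact_iff_coarselyBounded
    {G : Type*} [CommGroup G] [TopologicalSpace G] [IsTopologicalGroup G]
    [LocallyCompactSpace G] [T2Space G] (A : Set G) :
    IsCompact (closure A) ↔ CoarselyBounded A := by
  exact relativelyCompact_iff_coarselyBounded_aux A
end

section
/- Let X be an infinite-dimensional real Banach space and let (G_i)_{i ∈ I} be a family of locally compact Hausdorff topological groups. Then there is no group homomorphism ι from the additive group of X to the product group Π_{i ∈ I} G_i (with the product topology) that is a topological embedding, i.e., a homeomorphism onto its image. -/
open Filter Set Metric Topology Pointwise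

private lemma isCompact_pow_aux {H : Type*} [Monoid H] [TopologicalSpace H]
    [ContinuousMul H] {s : Set H} (hs : IsCompact s) : ∀ n : ℕ, IsCompact (s ^ (n + 1))
  | 0 => by simpa using hs
  | (n + 1) => by
    rw [pow_succ]
    exact (isCompact_pow_aux hs n).mul hs

/-- An infinite-dimensional real Banach space cannot be embedded, as a topological group,
into any product of locally compact Hausdorff topological groups. -/
theorem no_embedding_of_banach_into_product_of_locallyCompact_groups
    {X : Type*} [NormedAddCommGroup X] [NormedSpace ℝ X] [CompleteSpace X]
    (hX : ¬ FiniteDimensional ℝ X)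
    {I : Type*} (G : I → Type*) [∀ i, Group (G i)] [∀ i, TopologicalSpace (G i)]
    [∀ i, IsTopologicalGroup (G i)] [∀ i, LocallyCompactSpace (G i)] [∀ i, T2Space (G i)] :
    ¬ ∃ ι : X → (∀ i, G i),
        (∀ x y : X, ι (x + y) = ι x * ι y) ∧ Topology.IsEmbedding ι := by
  rintro ⟨ι, hhom, hemb⟩
  -- basic homomorphism facts
  have h0 : ι 0 = 1 := by
    have h := hhom 0 0
    rw [add_zero] at h
    exact (left_eq_mul.mp h)
  have hsmul : ∀ (n : ℕ) (y : X), ι (n • y) = ι y ^ n := by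
    intro n y
    induction n with
    | zero => simpa using h0
    | succ n ih => rw [succ_nsmul, hhom, ih, pow_succ]
  have hsub : ∀ x y : X, ι (x - y) = (ι y)⁻¹ * ι x := by
    intro x y
    have h := hhom y (x - y)
    rw [add_sub_cancel] at h
    rw [eq_inv_mul_iff_mul_eq]
    exact h.symm
  -- it suffices to show the closed unit ball is compact
  apply hX
  refine FiniteDimensional.of_isCompact_closedBall₀ ℝ one_pos
    (TotallyBounded.isCompact_of_isClosed ?_ Metric.isClosed_closedBall)
  rw [totallyBounded_iff]
  intro ε hε
  -- get a basic neighborhood from the embedding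
  have hball : ball (0 : X) ε ∈ 𝓝 (0 : X) := ball_mem_nhds _ hε
  rw [hemb.isInducing.nhds_eq_comap, h0, mem_comap] at hball
  obtain ⟨W, hW, hWball⟩ := hball
  rw [nhds_pi, Filter.mem_pi] at hW
  obtain ⟨S, hSfin, U, hU, hSU⟩ := hW
  haveI : Finite ↥S := hSfin.to_subtype
  -- work in the finite product H
  let f : X → (∀ i : S, G i.1) := fun x i => ι x i.1
  have hf0 : f 0 = 1 := by funext i; exact congrFun h0 i.1
  have hfsub : ∀ x y : X, f (x - y) = (f y)⁻¹ * f x := by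
    intro x y; funext i; exact congrFun (hsub x y) i.1
  have hfsmul : ∀ (n : ℕ) (y : X), f (n • y) = f y ^ n := by
    intro n y; funext i; exact congrFun (hsmul n y) i.1
  have fcont : Continuous f :=
    continuous_pi fun i => (continuous_apply i.1).comp hemb.continuous
  -- the target neighborhood in H
  set UH : Set (∀ i : S, G i.1) := Set.pi univ (fun i : S => U i.1) with hUHdef
  have hUH : UH ∈ 𝓝 (1 : ∀ i : S, G i.1) :=
    set_pi_mem_nhds finite_univ fun i _ => hU i.1
  have hlink : ∀ z : X, f z ∈ UH → z ∈ ball (0 : X) ε := by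
    intro z hz
    apply hWball
    apply hSU
    intro i hi
    exact hz ⟨i, hi⟩ (mem_univ _)
  -- choose a small symmetric neighborhood with compact closure
  obtain ⟨K, hKcomp, hKnhds⟩ := exists_compact_mem_nhds (1 : ∀ i : S, G i.1)
  obtain ⟨V₁, hV₁, hV₁split⟩ := exists_nhds_one_split hUH
  set V : Set (∀ i : S, G i.1) := V₁ ∩ V₁⁻¹ ∩ K with hVdef
  have hV : V ∈ 𝓝 (1 : ∀ i : S, G i.1) :=
    Filter.inter_mem (Filter.inter_mem hV₁ (inv_mem_nhds_one _ hV₁)) hKnhds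
  have hVsplit : ∀ v ∈ V, ∀ w ∈ V, w⁻¹ * v ∈ UH := by
    intro v hv w hw
    exact hV₁split _ (Set.mem_inv.mp hw.1.2) _ hv.1.1
  have hVK : V ⊆ K := fun x hx => hx.2
  have hclV : IsCompact (closure V) :=
    hKcomp.of_isClosed_subset isClosed_closure
      (closure_minimal hVK hKcomp.isClosed)
  -- find δ with ball 0 δ ⊆ f ⁻¹' V
  have hfV : f ⁻¹' V ∈ 𝓝 (0 : X) := by
    have := fcont.continuousAt (x := 0)
    rw [ContinuousAt, hf0] at this
    exact this hV
  obtain ⟨δ, hδ, hδsub⟩ := Metric.mem_nhds_iff.mp hfV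
  obtain ⟨m, hm⟩ := exists_nat_one_div_lt hδ
  set n : ℕ := m + 1 with hndef
  have hn : (1 : ℝ) / n < δ := by exact_mod_cast hm
  have hnpos : (0 : ℝ) < n := by positivity
  -- the image of the unit ball is contained in a compact set C
  set C : Set (∀ i : S, G i.1) := (closure V) ^ n with hCdef
  have hCcomp : IsCompact C := by
    rw [hCdef, hndef]
    exact isCompact_pow_aux hclV m
  have hfB : ∀ x ∈ closedBall (0 : X) 1, f x ∈ C := by
    intro x hx
    have hx1 : ‖x‖ ≤ 1 := mem_closedBall_zero_iff.mp hx
    set y : X := (n : ℝ)⁻¹ • x with hydef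
    have hny : n • y = x := by
      rw [hydef, ← Nat.cast_smul_eq_nsmul ℝ, smul_inv_smul₀ (by exact_mod_cast hnpos.ne')]
    have hy : y ∈ ball (0 : X) δ := by
      rw [mem_ball_zero_iff, hydef, norm_smul]
      calc ‖(n : ℝ)⁻¹‖ * ‖x‖ ≤ (n : ℝ)⁻¹ * 1 := by
            apply mul_le_mul _ hx1 (norm_nonneg x) (by positivity)
            rw [Real.norm_eq_abs, abs_of_pos (by positivity)]
          _ < δ := by rw [mul_one]; rw [one_div] at hn; exact hn
    have hyV : f y ∈ V := hδsub hy
    have : f x = f y ^ n := by rw [← hny, hfsmul]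
    rw [this]
    exact pow_mem_pow (subset_closure hyV)
  -- finite cover of C by translates of V
  obtain ⟨t, -, ht⟩ := hCcomp.elim_nhds_subcover (fun g => (g * ·) '' V)
    (fun g _ => by rw [← map_mul_left_nhds_one g]; exact image_mem_map hV)
  -- choose centers
  classical
  let c : (∀ i : S, G i.1) → X := fun g =>
    if h : ∃ x : X, x ∈ closedBall (0 : X) 1 ∧ f x ∈ (g * ·) '' V then h.choose else 0
  refine ⟨↑(t.image c), (t.image c).finite_toSet, ?_⟩
  intro x hx
  obtain ⟨g, hgt, hgx⟩ := Set.mem_iUnion₂.mp (ht (hfB x hx))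
  have hex : ∃ z : X, z ∈ closedBall (0 : X) 1 ∧ f z ∈ (g * ·) '' V := ⟨x, hx, hgx⟩
  have hcg : c g = hex.choose := dif_pos hex
  obtain ⟨hyB, hyV⟩ := hex.choose_spec
  set y := hex.choose with hydef
  obtain ⟨v, hv, hvx⟩ := hgx
  obtain ⟨w, hw, hwy⟩ := hyV
  have key : f (x - y) ∈ UH := by
    rw [hfsub, ← hwy, ← hvx, mul_inv_rev, mul_assoc, inv_mul_cancel_left]
    exact hVsplit v hv w hw
  have hxy : x ∈ ball y ε := by
    have := hlink _ key
    rw [mem_ball_zero_iff] at this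
    rw [mem_ball_iff_norm]
    exact this
  have hcmem : c g ∈ (↑(t.image c) : Set X) := by
    rw [Finset.coe_image]; exact ⟨g, hgt, rfl⟩
  exact Set.mem_biUnion hcmem (by rwa [hcg])
end

section
/- Let (G_i)_{i ∈ I} be a family of topological groups such that, for each i, every coarsely bounded subset of G_i is relatively compact. Then in the product group Π_{i ∈ I} G_i (with the product topology) every coarsely bounded subset is relatively compact. -/
/-- If in each topological group `G i` every coarsely bounded subset is relatively compact,
then the same holds in the product group `Π i, G i` with the product topology. -/
theorem pi_coarselyBounded_relativelyCompact
    {I : Type*} (G : I → Type*) [∀ i, Group (G i)] [∀ i, TopologicalSpace (G i)]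
    [∀ i, IsTopologicalGroup (G i)]
    (hG : ∀ i, ∀ A : Set (G i), CoarselyBounded A → IsCompact (closure A))
    (A : Set (∀ i, G i)) (hA : CoarselyBounded A) : IsCompact (closure A) := by
  have hproj : ∀ i, CoarselyBounded ((fun x : ∀ j, G j => x i) '' A) := by
    intro i f hf h1 hinv hsub
    have := hA (fun x => f (x i)) (hf.comp (continuous_apply i)) h1
      (fun g => hinv (g i)) (fun g h => hsub (g i) (h i))
    simpa [Set.image_image] using this
  have hK : IsCompact (Set.pi Set.univ fun i => closure ((fun x : ∀ j, G j => x i) '' A)) :=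
    isCompact_univ_pi fun i => hG i _ (hproj i)
  refine hK.of_isClosed_subset isClosed_closure ?_
  refine closure_minimal ?_ (isClosed_set_pi fun i _ => isClosed_closure)
  intro x hx i _
  exact subset_closure ⟨x, hx, rfl⟩
end

section
/- Let G be a paracompact Hausdorff topological group and let A ⊆ G. Then A is relatively compact if and only if f(A) is a bounded subset of ℝ for every continuous function f : G → ℝ. -/
open Set Function

/-- In a paracompact Hausdorff topological group, a subset `A` is relatively compact if and
only if every continuous real-valued function on `G` maps `A` onto a bounded subset of `ℝ`. -/
theorem relativelyCompact_iff_bounded_image_under_continuous_functions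
    {G : Type*} [Group G] [TopologicalSpace G] [IsTopologicalGroup G]
    [ParacompactSpace G] [T2Space G] (A : Set G) :
    IsCompact (closure A) ↔
      ∀ f : G → ℝ, Continuous f → Bornology.IsBounded (f '' A) := by
  constructor
  · intro hK f hf
    exact ((hK.image hf).isBounded).subset (image_mono (f := f) subset_closure)
  · intro hb
    by_contra hK
    set K := closure A with hKdef
    rw [isCompact_iff_finite_subcover] at hK
    push_neg at hK
    obtain ⟨ι, U, hUo, hUc, hfin⟩ := hK
    set W : Option ι → Set G := fun j => j.elim Kᶜ U with hW
    have hWo : ∀ j, IsOpen (W j) := by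
      rintro (_ | i)
      · exact isClosed_closure.isOpen_compl
      · exact hUo i
    have hWc : ⋃ j, W j = univ := by
      apply eq_univ_of_forall
      intro x
      by_cases hx : x ∈ K
      · obtain ⟨i, hi⟩ := mem_iUnion.1 (hUc hx)
        exact mem_iUnion.2 ⟨some i, hi⟩
      · exact mem_iUnion.2 ⟨none, hx⟩
    obtain ⟨V, hVo, hVc, hVlf, hVsub⟩ := precise_refinement W hWo hWc
    -- the set of indices whose piece meets K is infinite
    have hSinf : {i : ι | (V (some i) ∩ K).Nonempty}.Infinite := by
      intro hS
      apply hfin hS.toFinset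
      intro x hx
      have : x ∈ ⋃ j, V j := hVc ▸ mem_univ x
      obtain ⟨j, hj⟩ := mem_iUnion.1 this
      match j with
      | none => exact absurd (hVsub none hj) (not_not.2 hx)
      | some i =>
        refine mem_iUnion₂.2 ⟨i, ?_, hVsub (some i) hj⟩
        simp only [Set.Finite.mem_toFinset]
        exact ⟨x, hj, hx⟩
    let e : ℕ ↪ {i : ι | (V (some i) ∩ K).Nonempty} := hSinf.natEmbedding _
    have hx : ∀ n : ℕ, ∃ x, x ∈ V (some (e n)) ∩ K := fun n => (e n).2
    choose x hxV hxK using hx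
    -- Urysohn functions
    have hnormal : NormalSpace G := inferInstance
    have hφ : ∀ n : ℕ, ∃ φ : C(G, ℝ), EqOn φ 0 (V (some (e n)))ᶜ ∧ φ (x n) = 1 ∧
        ∀ y, φ y ∈ Icc (0 : ℝ) 1 := by
      intro n
      obtain ⟨φ, h0, h1, h01⟩ := exists_continuous_zero_one_of_isClosed
        (hVo (some (e n))).isClosed_compl isClosed_singleton
        (disjoint_compl_left_iff_subset.2 (singleton_subset_iff.2 (hxV n)))
      exact ⟨φ, h0, h1 rfl, h01⟩
    choose φ hφ0 hφ1 hφ01 using hφ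
    set g : ℕ → G → ℝ := fun n y => (n : ℝ) * φ n y with hg
    have hgsupp : ∀ n, support (g n) ⊆ V (some (e n)) := by
      intro n y hy
      by_contra hyV
      exact hy (by simp [hg, hφ0 n hyV])
    have hglf : LocallyFinite fun n => support (g n) := by
      refine LocallyFinite.subset ?_ hgsupp
      exact hVlf.comp_injective (fun a b hab => e.injective (Subtype.ext (Option.some.inj hab)))
    have hgc : ∀ n, Continuous (g n) := fun n => continuous_const.mul (φ n).continuous
    set f : G → ℝ := fun y => ∑ᶠ n, g n y with hf
    have hfc : Continuous f := continuous_finsum hgc hglf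
    have hgnn : ∀ n y, 0 ≤ g n y := fun n y =>
      mul_nonneg (Nat.cast_nonneg n) (hφ01 n y).1
    have hfK : ∀ n : ℕ, (n : ℝ) ≤ f (x n) := by
      intro n
      have hsupp : (support fun k => g k (x n)).Finite := by
        refine Set.Finite.subset (hglf.point_finite (x n)) ?_
        intro k hk
        exact hk
      have := single_le_finsum n hsupp (fun k => hgnn k (x n))
      simpa [hg, hφ1 n] using this
    -- f is bounded on K, contradiction
    have hbA := hb f hfc
    have hbK : Bornology.IsBounded (f '' K) :=
      hbA.closure.subset (image_closure_subset_closure_image hfc)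
    obtain ⟨C, hC⟩ := hbK.exists_norm_le
    obtain ⟨n, hn⟩ := exists_nat_gt C
    have h1 : f (x n) ≤ C := by
      have := hC (f (x n)) ⟨x n, hxK n, rfl⟩
      exact (le_abs_self _).trans this
    linarith [hfK n]
end

section
/- Let G be a σ-compact, locally compact, Hausdorff topological group and let A ⊆ G. Then A is relatively compact if and only if for every group H equipped with a left-invariant metric d and every continuous group homomorphism f : G → H (H carrying the metric topology), the image f(A) is d-bounded. -/
open Set Filter Topology Pointwise
open scoped NNReal

namespace RCBaux

variable {G : Type*} [Group G] [TopologicalSpace G] [IsTopologicalGroup G]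

lemma step_exists (C : Set G) (hC : IsCompact C) (Vn : Set G) (hVn : Vn ∈ 𝓝 (1 : G)) :
    ∃ V' : Set G, V' ∈ 𝓝 (1 : G) ∧ V'⁻¹ = V' ∧ (V' * V' * V' ⊆ Vn) ∧
      ∀ x ∈ C, ∀ h ∈ V', x * h * x⁻¹ ∈ Vn := by
  obtain ⟨P₁, hP₁o, hP₁1, hP₁⟩ := exists_open_nhds_one_mul_subset hVn
  obtain ⟨P₂, hP₂o, hP₂1, hP₂⟩ := exists_open_nhds_one_mul_subset (hP₁o.mem_nhds hP₁1)
  have hP₂P₁ : P₂ ⊆ P₁ := fun x hx => hP₂ (by simpa using Set.mul_mem_mul hx hP₂1)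
  -- conjugation control via tube lemma
  have hφ : Continuous fun p : G × G => p.1 * p.2 * p.1⁻¹ :=
    (continuous_fst.mul continuous_snd).mul continuous_fst.inv
  have hsub : C ×ˢ ({1} : Set G) ⊆ (fun p : G × G => p.1 * p.2 * p.1⁻¹) ⁻¹' interior Vn := by
    rintro ⟨x, y⟩ ⟨-, hy⟩
    simp only [mem_singleton_iff] at hy
    subst hy
    simp only [mem_preimage, mul_one, mul_inv_cancel]
    exact mem_interior_iff_mem_nhds.2 hVn
  obtain ⟨u, v, hu, hv, hCu, h1v, huv⟩ :=
    generalized_tube_lemma hC isCompact_singleton (isOpen_interior.preimage hφ) hsub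
  refine ⟨(P₂ ∩ v) ∩ (P₂ ∩ v)⁻¹, ?_, ?_, ?_, ?_⟩
  · have h1 : P₂ ∩ v ∈ 𝓝 (1 : G) :=
      Filter.inter_mem (hP₂o.mem_nhds hP₂1) (hv.mem_nhds (h1v rfl))
    exact Filter.inter_mem h1 (inv_mem_nhds_one (G := G) h1)
  · rw [Set.inter_inv, inv_inv, Set.inter_comm]
  · intro z hz
    rw [Set.mem_mul] at hz
    obtain ⟨w, hw, c, hc, rfl⟩ := hz
    rw [Set.mem_mul] at hw
    obtain ⟨a, ha, b, hb, rfl⟩ := hw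
    have ha' : a ∈ P₂ := ha.1.1
    have hb' : b ∈ P₂ := hb.1.1
    have hc' : c ∈ P₂ := hc.1.1
    exact hP₁ (Set.mul_mem_mul (hP₂ (Set.mul_mem_mul ha' hb')) (hP₂P₁ hc'))
  · intro x hx h hh
    have : (x, h) ∈ u ×ˢ v := ⟨hCu hx, hh.1.2⟩
    exact interior_subset (huv this)


lemma exists_W_of_UV (U V : ℕ → Set G)
    (hUc : ∀ n, IsCompact (U n)) (hUsymm : ∀ n, (U n)⁻¹ = U n) (hUn : ∀ n, U n ∈ 𝓝 1)
    (hUmono : ∀ n, U n ⊆ U (n + 1)) (hUtriple : ∀ n, U n * U n * U n ⊆ U (n + 1))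
    (hUcover : ∀ g : G, ∃ n, g ∈ U n)
    (hV0 : V 0 = U 0) (hVn : ∀ n, V n ∈ 𝓝 1) (hVsymm : ∀ n, (V (n + 1))⁻¹ = V (n + 1))
    (hVtriple : ∀ n, V (n + 1) * V (n + 1) * V (n + 1) ⊆ V n)
    (hVconj : ∀ k, ∀ x ∈ U k, ∀ h ∈ V (k + 1), x * h * x⁻¹ ∈ V k) :
    ∃ W : ℤ → Set G, Monotone W ∧ (∀ n, (W n)⁻¹ = W n) ∧ (∀ n, W n ∈ 𝓝 1) ∧
      (∀ n, W n * W n * W n ⊆ W (n + 1)) ∧ (∀ n : ℕ, IsCompact (W (n : ℤ))) ∧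
      (∀ g : G, ∃ n : ℕ, g ∈ W (n : ℤ)) ∧
      (∀ k : ℕ, ∀ x ∈ W (k : ℤ), ∀ h ∈ W (-(k : ℤ) - 1), x * h * x⁻¹ ∈ W (-(k : ℤ))) := by
  have hVone : ∀ n, (1 : G) ∈ V n := fun n => mem_of_mem_nhds (hVn n)
  have hVmono : ∀ n, V (n + 1) ⊆ V n := by
    intro n h hh
    have : (1 : G) * 1 * h ∈ V n :=
      hVtriple n (Set.mul_mem_mul (Set.mul_mem_mul (hVone _) (hVone _)) hh)
    simpa using this
  set W : ℤ → Set G := fun n => if 0 ≤ n then U n.toNat else V (-n).toNat with hW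
  have hWnat : ∀ k : ℕ, W (k : ℤ) = U k := by
    intro k; simp [hW]
  have hWneg : ∀ k : ℕ, W (-(k : ℤ) - 1) = V (k + 1) := by
    intro k
    have h1 : ¬ (0 ≤ -(k : ℤ) - 1) := by omega
    have h2 : (-(-(k : ℤ) - 1)).toNat = k + 1 := by omega
    simp only [hW, if_neg h1, h2]
  have hWneg' : ∀ k : ℕ, W (-(k : ℤ)) = V k := by
    intro k
    rcases Nat.eq_zero_or_pos k with rfl | hk
    · simpa [hW] using hV0.symm
    · have h1 : ¬ (0 ≤ -(k : ℤ)) := by omega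
      have h2 : (-(-(k : ℤ))).toNat = k := by omega
      simp only [hW, if_neg h1, h2]
  have hWmono : Monotone W := by
    apply monotone_int_of_le_succ
    intro n
    rcases le_or_gt 0 n with h | h
    · have e1 : W n = U n.toNat := by simp [hW, if_pos h]
      have e2 : W (n + 1) = U (n.toNat + 1) := by
        have : (n + 1).toNat = n.toNat + 1 := by omega
        simp [hW, if_pos (by omega : (0:ℤ) ≤ n + 1), this]
      rw [e1, e2]; exact hUmono n.toNat
    · obtain ⟨m, hm⟩ : ∃ m, (-n).toNat = m + 1 := ⟨(-n).toNat - 1, by omega⟩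
      have e1 : W n = V (m + 1) := by
        simp only [hW, if_neg (not_le.2 h)]; rw [hm]
      have e2 : W (n + 1) = V m := by
        rcases eq_or_lt_of_le (by omega : n + 1 ≤ 0) with h1 | h1
        · have hn : n = -1 := by omega
          have hm0 : m = 0 := by omega
          subst hn; subst hm0
          simp only [hW]
          norm_num [hV0]
        · have h2 : (-(n+1)).toNat = m := by omega
          simp only [hW, if_neg (by omega : ¬ (0:ℤ) ≤ n + 1)]; rw [h2]
      rw [e1, e2]
      exact hVmono _
  have hWsymm : ∀ n, (W n)⁻¹ = W n := by
    intro n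
    rcases le_or_gt 0 n with h | h
    · simp only [hW, if_pos h]; exact hUsymm _
    · obtain ⟨m, hm⟩ : ∃ m, (-n).toNat = m + 1 := ⟨(-n).toNat - 1, by omega⟩
      simp only [hW, if_neg (not_le.2 h)]
      rw [hm]; exact hVsymm _
  have hWnhds : ∀ n, W n ∈ 𝓝 (1 : G) := by
    intro n
    rcases le_or_gt 0 n with h | h
    · simp only [hW, if_pos h]; exact hUn _
    · simp only [hW, if_neg (not_le.2 h)]; exact hVn _
  have hWtriple : ∀ n, W n * W n * W n ⊆ W (n + 1) := by
    intro n
    rcases le_or_gt 0 n with h | h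
    · have e1 : W n = U n.toNat := by simp [hW, if_pos h]
      have e2 : W (n + 1) = U (n.toNat + 1) := by
        have : (n + 1).toNat = n.toNat + 1 := by omega
        simp [hW, if_pos (by omega : (0:ℤ) ≤ n + 1), this]
      rw [e1, e2]; exact hUtriple _
    · obtain ⟨m, hm⟩ : ∃ m, (-n).toNat = m + 1 := ⟨(-n).toNat - 1, by omega⟩
      have e1 : W n = V (m + 1) := by
        simp only [hW, if_neg (not_le.2 h)]; rw [hm]
      have e2 : W (n + 1) = V m := by
        rcases eq_or_lt_of_le (by omega : n + 1 ≤ 0) with h1 | h1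
        · have hn : n = -1 := by omega
          have hm0 : m = 0 := by omega
          subst hn; subst hm0
          simp only [hW]
          norm_num [hV0]
        · have h2 : (-(n+1)).toNat = m := by omega
          simp only [hW, if_neg (by omega : ¬ (0:ℤ) ≤ n + 1)]; rw [h2]
      rw [e1, e2]
      exact hVtriple _
  refine ⟨W, hWmono, hWsymm, hWnhds, hWtriple, ?_, ?_, ?_⟩
  · intro n; rw [hWnat]; exact hUc n
  · intro g
    obtain ⟨n, hn⟩ := hUcover g
    exact ⟨n, by rw [hWnat]; exact hn⟩
  · intro k x hx h hh
    rw [hWnat] at hx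
    rw [hWneg] at hh
    rw [hWneg']
    exact hVconj k x hx h hh


lemma exists_W [SigmaCompactSpace G] [WeaklyLocallyCompactSpace G] [T2Space G] :
    ∃ W : ℤ → Set G, Monotone W ∧ (∀ n, (W n)⁻¹ = W n) ∧ (∀ n, W n ∈ 𝓝 1) ∧
      (∀ n, W n * W n * W n ⊆ W (n + 1)) ∧ (∀ n : ℕ, IsCompact (W (n : ℤ))) ∧
      (∀ g : G, ∃ n : ℕ, g ∈ W (n : ℤ)) ∧
      (∀ k : ℕ, ∀ x ∈ W (k : ℤ), ∀ h ∈ W (-(k : ℤ) - 1), x * h * x⁻¹ ∈ W (-(k : ℤ))) := by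
  classical
  obtain ⟨K0, hK0c, hK0⟩ := exists_compact_mem_nhds (1 : G)
  set S₀ : Set G := K0 ∩ K0⁻¹ with hS₀def
  have hS₀c : IsCompact S₀ := hK0c.inter_right hK0c.inv.isClosed
  have hS₀n : S₀ ∈ 𝓝 (1 : G) := Filter.inter_mem hK0 (inv_mem_nhds_one (G := G) hK0)
  have hS₀symm : S₀⁻¹ = S₀ := by
    rw [hS₀def, Set.inter_inv, inv_inv, Set.inter_comm]
  -- the increasing sequence U
  set U : ℕ → Set G := fun n => Nat.rec S₀
    (fun k Uk =>
      (Uk * Uk * Uk ∪ compactCovering G k ∪ Uk) ∪ (Uk * Uk * Uk ∪ compactCovering G k ∪ Uk)⁻¹)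
    n with hUdef
  have hUsucc : ∀ k, U (k + 1) =
      (U k * U k * U k ∪ compactCovering G k ∪ U k) ∪
        (U k * U k * U k ∪ compactCovering G k ∪ U k)⁻¹ := fun k => rfl
  have hUc : ∀ n, IsCompact (U n) := by
    intro n
    induction n with
    | zero => exact hS₀c
    | succ k ih =>
      rw [hUsucc]
      have h1 : IsCompact (U k * U k * U k ∪ compactCovering G k ∪ U k) :=
        (((ih.mul ih).mul ih).union (isCompact_compactCovering G k)).union ih
      exact h1.union h1.inv
  have hUsymm : ∀ n, (U n)⁻¹ = U n := by
    intro n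
    cases n with
    | zero => exact hS₀symm
    | succ k =>
      rw [hUsucc, Set.union_inv, inv_inv, Set.union_comm]
  have hUmono : ∀ n, U n ⊆ U (n + 1) := by
    intro n
    rw [hUsucc]
    exact fun x hx => Or.inl (Or.inr hx)
  have hUn : ∀ n, U n ∈ 𝓝 (1 : G) := by
    intro n
    induction n with
    | zero => exact hS₀n
    | succ k ih => exact Filter.mem_of_superset ih (hUmono k)
  have hUtriple : ∀ n, U n * U n * U n ⊆ U (n + 1) := by
    intro n
    rw [hUsucc]
    exact fun x hx => Or.inl (Or.inl (Or.inl hx))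
  have hUcover : ∀ g : G, ∃ n, g ∈ U n := by
    intro g
    have : g ∈ ⋃ n, compactCovering G n := by
      rw [iUnion_compactCovering]; trivial
    obtain ⟨n, hn⟩ := mem_iUnion.1 this
    exact ⟨n + 1, by rw [hUsucc]; exact Or.inl (Or.inl (Or.inr hn))⟩
  -- the decreasing sequence V, by recursive choice
  set Vp : ℕ → {S : Set G // S ∈ 𝓝 (1 : G)} := fun n => Nat.rec ⟨S₀, hS₀n⟩
    (fun k Vk => ⟨Classical.choose (step_exists (U k) (hUc k) Vk.1 Vk.2),
      (Classical.choose_spec (step_exists (U k) (hUc k) Vk.1 Vk.2)).1⟩) n with hVpdef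
  set V : ℕ → Set G := fun n => (Vp n).1 with hVdef
  have hVspec : ∀ k, (V (k + 1))⁻¹ = V (k + 1) ∧ (V (k + 1) * V (k + 1) * V (k + 1) ⊆ V k) ∧
      ∀ x ∈ U k, ∀ h ∈ V (k + 1), x * h * x⁻¹ ∈ V k := by
    intro k
    have h := Classical.choose_spec (step_exists (U k) (hUc k) (Vp k).1 (Vp k).2)
    exact ⟨h.2.1, h.2.2.1, h.2.2.2⟩
  exact exists_W_of_UV U V hUc hUsymm hUn hUmono hUtriple hUcover rfl (fun n => (Vp n).2)
    (fun n => (hVspec n).1) (fun n => (hVspec n).2.1) (fun k => (hVspec k).2.2)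


section rho

omit [TopologicalSpace G] [IsTopologicalGroup G]

lemma nnreal_eq_zero_of_le (x : ℝ≥0) (h : ∀ k : ℕ, x ≤ 2 ^ (-(k : ℤ))) : x = 0 := by
  have h2 : Tendsto (fun k : ℕ => ((2 : ℝ≥0)⁻¹) ^ k) atTop (𝓝 0) :=
    NNReal.tendsto_pow_atTop_nhds_zero_of_lt_one
      (by rw [inv_lt_one₀ (by norm_num : (0:ℝ≥0) < 2)]; norm_num)
  have hx : x ≤ 0 := ge_of_tendsto' h2 (fun k => by
    have he : ((2 : ℝ≥0)⁻¹) ^ k = 2 ^ (-(k : ℤ)) := by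
      rw [← zpow_natCast ((2 : ℝ≥0)⁻¹) k, inv_zpow, ← zpow_neg]
    rw [he]
    exact h k)
  exact le_antisymm hx (zero_le)



noncomputable def rho (W : ℤ → Set G) (g : G) : ℝ≥0 :=
  sInf ((fun n : ℤ => (2 : ℝ≥0) ^ n) '' {n : ℤ | g ∈ W n})

lemma rho_le (W : ℤ → Set G) {g : G} {n : ℤ} (h : g ∈ W n) : rho W g ≤ 2 ^ n :=
  csInf_le (OrderBot.bddBelow _) ⟨n, h, rfl⟩

lemma mem_of_rho_le (W : ℤ → Set G) (hmono : Monotone W)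
    (hcover : ∀ g : G, ∃ n : ℕ, g ∈ W (n : ℤ)) {g : G} {n : ℤ}
    (h : rho W g ≤ 2 ^ n) : g ∈ W n := by
  by_contra hg
  obtain ⟨m, hm⟩ := hcover g
  have hlb : (2 : ℝ≥0) ^ (n + 1) ≤ rho W g := by
    refine le_csInf ⟨(2 : ℝ≥0) ^ (m : ℤ), ⟨(m : ℤ), hm, rfl⟩⟩ ?_
    rintro r ⟨i, hi, rfl⟩
    have hni : n < i := by
      by_contra hni
      exact hg (hmono (not_lt.1 hni) hi)
    exact zpow_le_zpow_right₀ one_le_two (by omega)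
  exact absurd (hlb.trans h) (not_le.2 (zpow_lt_zpow_right₀ one_lt_two (by omega)))

lemma rho_eq_zero_of_forall (W : ℤ → Set G) {g : G} (h : ∀ n, g ∈ W n) : rho W g = 0 :=
  nnreal_eq_zero_of_le _ fun _ => rho_le W (h _)

lemma mem_of_rho_eq_zero (W : ℤ → Set G) (hmono : Monotone W)
    (hcover : ∀ g : G, ∃ n : ℕ, g ∈ W (n : ℤ)) {g : G} (h : rho W g = 0) (n : ℤ) :
    g ∈ W n :=
  mem_of_rho_le W hmono hcover (h ▸ zero_le)

lemma rho_inv (W : ℤ → Set G) (hsymm : ∀ n, (W n)⁻¹ = W n) (g : G) :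
    rho W g⁻¹ = rho W g := by
  have hset : {n : ℤ | g⁻¹ ∈ W n} = {n : ℤ | g ∈ W n} := by
    ext n
    simp only [mem_setOf_eq]
    rw [← hsymm n, Set.mem_inv, inv_inv, hsymm n]
  unfold rho
  rw [hset]

lemma rho_one (W : ℤ → Set G) (hnhds : ∀ n, (1 : G) ∈ W n) : rho W 1 = 0 :=
  rho_eq_zero_of_forall W hnhds

lemma rho_pos_spec (W : ℤ → Set G) (hmono : Monotone W)
    (hcover : ∀ g : G, ∃ n : ℕ, g ∈ W (n : ℤ)) (g : G) (h : rho W g ≠ 0) :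
    ∃ m : ℤ, rho W g = 2 ^ m ∧ g ∈ W m := by
  have hex : ∃ n₀ : ℤ, g ∉ W n₀ := by
    by_contra hall
    push_neg at hall
    exact h (rho_eq_zero_of_forall W hall)
  obtain ⟨n₀, hn₀⟩ := hex
  obtain ⟨m₀, hm₀⟩ := hcover g
  obtain ⟨m, hm, hmin⟩ := Int.exists_least_of_bdd (P := fun n => g ∈ W n)
    ⟨n₀, fun z hz => by
      by_contra hlt
      exact hn₀ (hmono (by omega : z ≤ n₀) hz)⟩
    ⟨(m₀ : ℤ), hm₀⟩
  refine ⟨m, le_antisymm (rho_le W hm) ?_, hm⟩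
  refine le_csInf ⟨(2 : ℝ≥0) ^ (m₀ : ℤ), ⟨(m₀ : ℤ), hm₀, rfl⟩⟩ ?_
  rintro r ⟨i, hi, rfl⟩
  exact zpow_le_zpow_right₀ one_le_two (hmin i hi)

lemma rho_triple (W : ℤ → Set G) (hmono : Monotone W)
    (htriple : ∀ n, W n * W n * W n ⊆ W (n + 1))
    (hcover : ∀ g : G, ∃ n : ℕ, g ∈ W (n : ℤ)) (a b c : G) :
    rho W (a * b * c) ≤ 2 * max (rho W a) (max (rho W b) (rho W c)) := by
  have key : ∀ n : ℤ, a ∈ W n → b ∈ W n → c ∈ W n → rho W (a * b * c) ≤ 2 ^ (n + 1) :=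
    fun n ha hb hc => rho_le W (htriple n (Set.mul_mem_mul (Set.mul_mem_mul ha hb) hc))
  set M := max (rho W a) (max (rho W b) (rho W c)) with hM
  have haM : rho W a ≤ M := le_max_left _ _
  have hbM : rho W b ≤ M := (le_max_left _ _).trans (le_max_right _ _)
  have hcM : rho W c ≤ M := (le_max_right _ _).trans (le_max_right _ _)
  rcases eq_or_ne M 0 with h0 | h0
  · have ha0 : rho W a = 0 := le_antisymm (h0 ▸ haM) (zero_le)
    have hb0 : rho W b = 0 := le_antisymm (h0 ▸ hbM) (zero_le)
    have hc0 : rho W c = 0 := le_antisymm (h0 ▸ hcM) (zero_le)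
    have habc : rho W (a * b * c) = 0 := by
      apply nnreal_eq_zero_of_le
      intro k
      have hk := key (-(k : ℤ) - 1) (mem_of_rho_eq_zero W hmono hcover ha0 _)
        (mem_of_rho_eq_zero W hmono hcover hb0 _) (mem_of_rho_eq_zero W hmono hcover hc0 _)
      have : (-(k : ℤ) - 1) + 1 = -(k : ℤ) := by ring
      rwa [this] at hk
    rw [habc, h0, mul_zero]
  · have hMval : ∃ x : G, M = rho W x := by
      rcases max_choice (rho W a) (max (rho W b) (rho W c)) with h1 | h1
      · exact ⟨a, h1⟩
      · rcases max_choice (rho W b) (rho W c) with h2 | h2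
        · exact ⟨b, h1.trans h2⟩
        · exact ⟨c, h1.trans h2⟩
    obtain ⟨x, hx⟩ := hMval
    obtain ⟨m, hMm, -⟩ := rho_pos_spec W hmono hcover x (by rw [← hx]; exact h0)
    rw [hx] at haM hbM hcM ⊢
    rw [hMm] at haM hbM hcM ⊢
    have ham : a ∈ W m := mem_of_rho_le W hmono hcover haM
    have hbm : b ∈ W m := mem_of_rho_le W hmono hcover hbM
    have hcm : c ∈ W m := mem_of_rho_le W hmono hcover hcM
    calc rho W (a * b * c) ≤ 2 ^ (m + 1) := key m ham hbm hcm
      _ = 2 * 2 ^ m := by rw [zpow_add_one₀ two_ne_zero]; ring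


noncomputable def dpre (W : ℤ → Set G) (x y : G) : ℝ≥0 := rho W (x⁻¹ * y)

lemma dpre_self (W : ℤ → Set G) (hone : ∀ n, (1 : G) ∈ W n) (x : G) : dpre W x x = 0 := by
  unfold dpre
  rw [inv_mul_cancel]
  exact rho_one W hone

lemma dpre_comm (W : ℤ → Set G) (hsymm : ∀ n, (W n)⁻¹ = W n) (x y : G) :
    dpre W x y = dpre W y x := by
  unfold dpre
  rw [← rho_inv W hsymm (y⁻¹ * x), mul_inv_rev, inv_inv]

lemma dpre_quad (W : ℤ → Set G) (hmono : Monotone W)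
    (htriple : ∀ n, W n * W n * W n ⊆ W (n + 1))
    (hcover : ∀ g : G, ∃ n : ℕ, g ∈ W (n : ℤ)) (x₁ x₂ x₃ x₄ : G) :
    dpre W x₁ x₄ ≤ 2 * max (dpre W x₁ x₂) (max (dpre W x₂ x₃) (dpre W x₃ x₄)) := by
  have h := rho_triple W hmono htriple hcover (x₁⁻¹ * x₂) (x₂⁻¹ * x₃) (x₃⁻¹ * x₄)
  have he : (x₁⁻¹ * x₂) * (x₂⁻¹ * x₃) * (x₃⁻¹ * x₄) = x₁⁻¹ * x₄ := by group
  rw [he] at h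
  exact h

noncomputable def DP (W : ℤ → Set G) (hone : ∀ n, (1 : G) ∈ W n)
    (hsymm : ∀ n, (W n)⁻¹ = W n) : G → G → ℝ :=
  @dist G (PseudoMetricSpace.ofPreNNDist (dpre W) (dpre_self W hone) (dpre_comm W hsymm)).toDist

variable (W : ℤ → Set G) (hone : ∀ n, (1 : G) ∈ W n) (hsymm : ∀ n, (W n)⁻¹ = W n)

lemma DP_le (x y : G) : DP W hone hsymm x y ≤ dpre W x y :=
  PseudoMetricSpace.dist_ofPreNNDist_le _ _ _ x y

lemma le_DP (hmono : Monotone W) (htriple : ∀ n, W n * W n * W n ⊆ W (n + 1))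
    (hcover : ∀ g : G, ∃ n : ℕ, g ∈ W (n : ℤ)) (x y : G) :
    (dpre W x y : ℝ) ≤ 2 * DP W hone hsymm x y :=
  PseudoMetricSpace.le_two_mul_dist_ofPreNNDist _ _ _
    (dpre_quad W hmono htriple hcover) x y

lemma DP_nonneg (x y : G) : 0 ≤ DP W hone hsymm x y := by
  rw [DP, PseudoMetricSpace.dist_ofPreNNDist]
  exact NNReal.coe_nonneg _

lemma DP_self (x : G) : DP W hone hsymm x x = 0 :=
  (PseudoMetricSpace.ofPreNNDist (dpre W) (dpre_self W hone) (dpre_comm W hsymm)).dist_self x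

lemma DP_comm (x y : G) : DP W hone hsymm x y = DP W hone hsymm y x :=
  (PseudoMetricSpace.ofPreNNDist (dpre W) (dpre_self W hone) (dpre_comm W hsymm)).dist_comm x y

lemma DP_triangle (x y z : G) :
    DP W hone hsymm x z ≤ DP W hone hsymm x y + DP W hone hsymm y z := by
  unfold DP
  exact @dist_triangle G (PseudoMetricSpace.ofPreNNDist (dpre W) (dpre_self W hone)
    (dpre_comm W hsymm)) x y z

lemma DP_invariant (k x y : G) :
    DP W hone hsymm (k * x) (k * y) = DP W hone hsymm x y := by
  rw [DP, PseudoMetricSpace.dist_ofPreNNDist, PseudoMetricSpace.dist_ofPreNNDist]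
  congr 1
  have hsurj : Function.Surjective (List.map (fun a : G => k⁻¹ * a)) := by
    intro l
    refine ⟨List.map (fun a => k * a) l, ?_⟩
    rw [List.map_map]
    have : ((fun a : G => k⁻¹ * a) ∘ fun a : G => k * a) = id := by
      funext a; simp
    rw [this, List.map_id]
  refine hsurj.iInf_congr _ fun l => ?_
  have h1 : x :: List.map (fun a : G => k⁻¹ * a) l =
      List.map (fun a : G => k⁻¹ * a) ((k * x) :: l) := by
    rw [List.map_cons, inv_mul_cancel_left]
  have h2 : List.map (fun a : G => k⁻¹ * a) l ++ [y] =
      List.map (fun a : G => k⁻¹ * a) (l ++ [k * y]) := by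
    rw [List.map_append, List.map_singleton, inv_mul_cancel_left]
  rw [h1, h2, List.zipWith_map]
  have he : (fun a b : G => dpre W (k⁻¹ * a) (k⁻¹ * b)) = dpre W := by
    funext a b
    unfold dpre
    congr 1
    simp [mul_assoc]
  rw [he]


end rho

lemma real_le_zero_of_le (r : ℝ) (h : ∀ j : ℕ, r ≤ 2 * (2 : ℝ) ^ (-(j : ℤ))) : r ≤ 0 := by
  have he : ∀ j : ℕ, (2 : ℝ) ^ (-(j : ℤ)) = (2⁻¹ : ℝ) ^ j := by
    intro j
    rw [zpow_neg, zpow_natCast, inv_pow]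
  have h2 : Tendsto (fun j : ℕ => 2 * (2⁻¹ : ℝ) ^ j) atTop (𝓝 0) := by
    have := tendsto_pow_atTop_nhds_zero_of_lt_one (by norm_num : (0:ℝ) ≤ 2⁻¹)
      (by norm_num : (2⁻¹ : ℝ) < 1)
    simpa using (this.const_mul (2 : ℝ))
  exact ge_of_tendsto' h2 fun j => by rw [← he j]; exact h j

theorem reverse_direction
    {G : Type*} [Group G] [TopologicalSpace G] [IsTopologicalGroup G]
    [SigmaCompactSpace G] [LocallyCompactSpace G] [T2Space G] (A : Set G)
    (hb : ∀ (H : Type) [Group H] [MetricSpace H],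
        (∀ k g h : H, dist (k * g) (k * h) = dist g h) →
        ∀ f : G →* H, Continuous f → Bornology.IsBounded ((f : G → H) '' A)) :
    IsCompact (closure A) := by
  classical
  obtain ⟨W, hmono, hsymm, hnhds, htriple, hcpt, hcover, hconj⟩ := exists_W (G := G)
  have hone : ∀ n, (1 : G) ∈ W n := fun n => mem_of_mem_nhds (hnhds n)
  set D : G → G → ℝ := DP W hone hsymm with hD
  -- the normal subgroup
  set N : Subgroup G :=
    { carrier := {g | ∀ n : ℤ, g ∈ W n}
      one_mem' := fun n => hone n
      mul_mem' := by
        intro a b ha hb n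
        have h := htriple (n - 1)
          (Set.mul_mem_mul (Set.mul_mem_mul (ha (n - 1)) (hb (n - 1))) (hone (n - 1)))
        have he : n - 1 + 1 = n := by ring
        rw [he] at h
        simpa using h
      inv_mem' := by
        intro a ha n
        rw [← hsymm n]
        exact Set.inv_mem_inv.2 (ha n) } with hNdef
  have hNmem : ∀ g : G, g ∈ N ↔ ∀ n : ℤ, g ∈ W n := fun g => Iff.rfl
  have hNnormal : N.Normal := by
    constructor
    intro a ha g n
    obtain ⟨k, hk⟩ := hcover g
    set k' : ℕ := k + n.natAbs with hk'def
    have hg : g ∈ W (k' : ℤ) := hmono (by omega) hk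
    have h1 := hconj k' g hg a (ha _)
    exact hmono (by omega : -(k' : ℤ) ≤ n) h1
  haveI := hNnormal
  -- D vanishes on N-cosets
  have hD0 : ∀ x y : G, x⁻¹ * y ∈ N → D x y = 0 := by
    intro x y hxy
    refine le_antisymm ?_ (DP_nonneg W hone hsymm x y)
    have h1 : D x y ≤ (dpre W x y : ℝ) := DP_le W hone hsymm x y
    have h2 : dpre W x y = 0 := rho_eq_zero_of_forall W ((hNmem _).1 hxy)
    rw [h2] at h1
    simpa using h1
  have hDcongr : ∀ a₁ b₁ a₂ b₂ : G, a₁⁻¹ * b₁ ∈ N → a₂⁻¹ * b₂ ∈ N → D a₁ a₂ = D b₁ b₂ := by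
    have key : ∀ a₁ b₁ a₂ b₂ : G, a₁⁻¹ * b₁ ∈ N → a₂⁻¹ * b₂ ∈ N → D a₁ a₂ ≤ D b₁ b₂ := by
      intro a₁ b₁ a₂ b₂ h1 h2
      have e1 : D a₁ b₁ = 0 := hD0 _ _ h1
      have e2 : D b₂ a₂ = 0 :=
        hD0 _ _ (by simpa [mul_inv_rev] using N.inv_mem h2)
      calc D a₁ a₂ ≤ D a₁ b₁ + D b₁ a₂ := DP_triangle W hone hsymm _ _ _
        _ ≤ D a₁ b₁ + (D b₁ b₂ + D b₂ a₂) :=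
          add_le_add_right (DP_triangle W hone hsymm _ _ _) _
        _ = D b₁ b₂ := by rw [e1, e2]; ring
    intro a₁ b₁ a₂ b₂ h1 h2
    refine le_antisymm (key _ _ _ _ h1 h2) (key _ _ _ _ ?_ ?_)
    · have := N.inv_mem h1
      simpa [mul_inv_rev] using this
    · have := N.inv_mem h2
      simpa [mul_inv_rev] using this
  -- the quotient
  set Q := G ⧸ N with hQ
  set DQ : Q → Q → ℝ := fun p q => Quotient.liftOn₂' p q D
    (fun a₁ a₂ b₁ b₂ h1 h2 =>
      hDcongr a₁ b₁ a₂ b₂ (QuotientGroup.leftRel_apply.1 h1)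
        (QuotientGroup.leftRel_apply.1 h2)) with hDQ
  have hDQmk : ∀ x y : G, DQ (QuotientGroup.mk x) (QuotientGroup.mk y) = D x y :=
    fun _ _ => rfl
  have hDQself : ∀ p : Q, DQ p p = 0 := by
    intro p
    obtain ⟨x, rfl⟩ := QuotientGroup.mk_surjective p
    rw [hDQmk]
    exact DP_self W hone hsymm x
  have hDQcomm : ∀ p q : Q, DQ p q = DQ q p := by
    intro p q
    obtain ⟨x, rfl⟩ := QuotientGroup.mk_surjective p
    obtain ⟨y, rfl⟩ := QuotientGroup.mk_surjective q
    rw [hDQmk, hDQmk]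
    exact DP_comm W hone hsymm x y
  have hDQtri : ∀ p q r : Q, DQ p r ≤ DQ p q + DQ q r := by
    intro p q r
    obtain ⟨x, rfl⟩ := QuotientGroup.mk_surjective p
    obtain ⟨y, rfl⟩ := QuotientGroup.mk_surjective q
    obtain ⟨z, rfl⟩ := QuotientGroup.mk_surjective r
    rw [hDQmk, hDQmk, hDQmk]
    exact DP_triangle W hone hsymm x y z
  have hDQeq : ∀ p q : Q, DQ p q = 0 → p = q := by
    intro p q h
    obtain ⟨x, rfl⟩ := QuotientGroup.mk_surjective p
    obtain ⟨y, rfl⟩ := QuotientGroup.mk_surjective q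
    rw [hDQmk] at h
    have h1 : (dpre W x y : ℝ) ≤ 2 * D x y :=
      le_DP W hone hsymm hmono htriple hcover x y
    rw [h, mul_zero] at h1
    have h2 : dpre W x y = 0 := le_antisymm (by exact_mod_cast h1) (zero_le)
    refine QuotientGroup.eq.2 ?_
    rw [hNmem]
    intro n
    exact mem_of_rho_le W hmono hcover (le_of_eq_of_le h2 (zero_le) : rho W (x⁻¹ * y) ≤ 2 ^ n)
  have hDQinv : ∀ r p q : Q, DQ (r * p) (r * q) = DQ p q := by
    intro r p q
    obtain ⟨u, rfl⟩ := QuotientGroup.mk_surjective r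
    obtain ⟨x, rfl⟩ := QuotientGroup.mk_surjective p
    obtain ⟨y, rfl⟩ := QuotientGroup.mk_surjective q
    rw [← QuotientGroup.mk_mul, ← QuotientGroup.mk_mul, hDQmk, hDQmk]
    exact DP_invariant W hone hsymm u x y
  have hDQnonneg : ∀ p q : Q, 0 ≤ DQ p q := by
    intro p q
    obtain ⟨x, rfl⟩ := QuotientGroup.mk_surjective p
    obtain ⟨y, rfl⟩ := QuotientGroup.mk_surjective q
    rw [hDQmk]
    exact DP_nonneg W hone hsymm x y
  -- countable dense subset
  have hFex : ∀ n j : ℕ, ∃ t : Finset G,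
      compactCovering G n ⊆ ⋃ g ∈ t, g • interior (W (-(j : ℤ))) := by
    intro n j
    apply (isCompact_compactCovering G n).elim_finite_subcover
      (fun g : G => g • interior (W (-(j : ℤ)))) (fun g => isOpen_interior.smul g)
    intro x _
    refine Set.mem_iUnion.2 ⟨x, ?_⟩
    rw [mem_smul_set_iff_inv_smul_mem, smul_eq_mul, inv_mul_cancel]
    exact mem_interior_iff_mem_nhds.2 (hnhds _)
  choose F hF using hFex
  set T₀ : Set G := ⋃ n : ℕ, ⋃ j : ℕ, (F n j : Set G) with hT₀
  have hT₀count : T₀.Countable :=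
    Set.countable_iUnion fun n => Set.countable_iUnion fun j => (F n j).countable_toSet
  have hdense : ∀ (x : G) (j : ℕ), ∃ a ∈ T₀, dpre W a x ≤ 2 ^ (-(j : ℤ)) := by
    intro x j
    obtain ⟨n, hn⟩ := exists_mem_compactCovering x
    have hx := hF n j hn
    rw [Set.mem_iUnion₂] at hx
    obtain ⟨a, haF, hax⟩ := hx
    refine ⟨a, Set.mem_iUnion.2 ⟨n, Set.mem_iUnion.2 ⟨j, haF⟩⟩, ?_⟩
    have h1 : a⁻¹ * x ∈ W (-(j : ℤ)) := by
      have h2 := mem_smul_set_iff_inv_smul_mem.1 hax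
      rw [smul_eq_mul] at h2
      exact interior_subset h2
    exact rho_le W h1
  set S : Set Q := QuotientGroup.mk '' T₀ with hS
  have hScount : S.Countable := hT₀count.image _
  have hSne : S.Nonempty := by
    obtain ⟨a, ha, -⟩ := hdense 1 0
    exact ⟨QuotientGroup.mk a, Set.mem_image_of_mem _ ha⟩
  obtain ⟨tseq, htseq⟩ := Set.Countable.exists_eq_range hScount hSne
  have hdenseQ : ∀ (p : Q) (j : ℕ), ∃ k : ℕ, DQ (tseq k) p ≤ (2 : ℝ) ^ (-(j : ℤ)) := by
    intro p j
    obtain ⟨x, rfl⟩ := QuotientGroup.mk_surjective p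
    obtain ⟨a, haT, ha⟩ := hdense x j
    have hmem : QuotientGroup.mk a ∈ S := Set.mem_image_of_mem _ haT
    rw [htseq, Set.mem_range] at hmem
    obtain ⟨k, hk⟩ := hmem
    refine ⟨k, ?_⟩
    rw [hk, hDQmk]
    calc D a x ≤ (dpre W a x : ℝ) := DP_le W hone hsymm a x
      _ ≤ ((2 : ℝ≥0) ^ (-(j : ℤ)) : ℝ≥0) := NNReal.coe_le_coe.2 ha
      _ = (2 : ℝ) ^ (-(j : ℤ)) := by push_cast; ring
  have hιinj : Function.Injective (fun q : Q => fun k : ℕ => DQ q (tseq k)) := by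
    intro p q hpq
    rw [funext_iff] at hpq
    have hpq' : ∀ k : ℕ, DQ p (tseq k) = DQ q (tseq k) := fun k => hpq k
    apply hDQeq
    have key : ∀ j : ℕ, DQ p q ≤ 2 * (2 : ℝ) ^ (-(j : ℤ)) := by
      intro j
      obtain ⟨k, hk⟩ := hdenseQ p j
      have e1 : DQ p (tseq k) ≤ (2 : ℝ) ^ (-(j : ℤ)) := (hDQcomm p (tseq k)) ▸ hk
      have e2 : DQ (tseq k) q ≤ (2 : ℝ) ^ (-(j : ℤ)) := by
        rw [hDQcomm (tseq k) q, ← hpq' k, hDQcomm p (tseq k)]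
        exact hk
      have h1 : DQ p q ≤ DQ p (tseq k) + DQ (tseq k) q := hDQtri _ _ _
      linarith
    exact le_antisymm (real_le_zero_of_le _ key) (hDQnonneg p q)
  haveI : Small.{0} Q := small_of_injective hιinj
  set H := Shrink.{0} Q with hH
  set em : H ≃* Q := Shrink.mulEquiv with hem
  letI : MetricSpace H :=
    { dist := fun a b => DQ (em a) (em b)
      dist_self := fun a => hDQself _
      dist_comm := fun a b => hDQcomm _ _
      dist_triangle := fun a b c => hDQtri _ _ _
      eq_of_dist_eq_zero := fun {a b} h => em.injective (hDQeq _ _ h) }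
  have hdistH : ∀ a b : H, dist a b = DQ (em a) (em b) := fun _ _ => rfl
  have hinvH : ∀ k g h : H, dist (k * g) (k * h) = dist g h := by
    intro k g h
    rw [hdistH, hdistH, map_mul, map_mul]
    exact hDQinv _ _ _
  set f : G →* H := em.symm.toMonoidHom.comp (QuotientGroup.mk' N) with hf
  have hfval : ∀ x : G, em (f x) = QuotientGroup.mk x := by
    intro x
    show em (em.symm (QuotientGroup.mk' N x)) = _
    rw [MulEquiv.apply_symm_apply]
    rfl
  letI : TopologicalSpace H := PseudoMetricSpace.toUniformSpace.toTopologicalSpace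
  have hfc : @Continuous G H _ PseudoMetricSpace.toUniformSpace.toTopologicalSpace f := by
    rw [continuous_iff_continuousAt]
    intro g
    rw [ContinuousAt, Metric.tendsto_nhds]
    intro ε hε
    obtain ⟨j, hj⟩ := exists_pow_lt_of_lt_one hε (by norm_num : (2⁻¹ : ℝ) < 1)
    have hjε : (2 : ℝ) ^ (-(j : ℤ)) < ε := by
      rw [zpow_neg, zpow_natCast, ← inv_pow]
      exact hj
    have hWg : {x : G | x⁻¹ * g ∈ W (-(j : ℤ))} ∈ 𝓝 g := by
      have hc : ContinuousAt (fun x : G => x⁻¹ * g) g :=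
        (continuous_inv.mul continuous_const).continuousAt
      have h1 := hc.preimage_mem_nhds (by rw [inv_mul_cancel]; exact hnhds (-(j : ℤ)))
      exact h1
    filter_upwards [hWg] with x hx
    have h1 : dist (f x) (f g) = D x g := by
      rw [hdistH, hfval, hfval, hDQmk]
    rw [h1]
    have h2 : D x g ≤ (dpre W x g : ℝ) := DP_le W hone hsymm x g
    have h3 : dpre W x g ≤ 2 ^ (-(j : ℤ)) := rho_le W hx
    have h4 : (dpre W x g : ℝ) ≤ (2 : ℝ) ^ (-(j : ℤ)) := by
      calc (dpre W x g : ℝ) ≤ ((2 : ℝ≥0) ^ (-(j : ℤ)) : ℝ≥0) := NNReal.coe_le_coe.2 h3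
        _ = (2 : ℝ) ^ (-(j : ℤ)) := by push_cast; ring
    linarith
  have hbd := hb H hinvH f hfc
  rcases A.eq_empty_or_nonempty with rfl | ⟨a₀, ha₀⟩
  · simp
  obtain ⟨C, hC⟩ := Metric.isBounded_iff.1 hbd
  obtain ⟨n, hn⟩ := pow_unbounded_of_one_lt (2 * C) (one_lt_two (α := ℝ))
  have hsubset : A ⊆ (fun y => a₀ * y) '' W (n : ℤ) := by
    intro a ha
    have h1 : dist (f a₀) (f a) ≤ C :=
      hC (Set.mem_image_of_mem _ ha₀) (Set.mem_image_of_mem _ ha)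
    have h2 : dist (f a₀) (f a) = D a₀ a := by rw [hdistH, hfval, hfval, hDQmk]
    have h2' : D a₀ a ≤ C := h2 ▸ h1
    have h3 : (dpre W a₀ a : ℝ) ≤ 2 * C := by
      have hh := le_DP W hone hsymm hmono htriple hcover a₀ a
      have : DP W hone hsymm a₀ a ≤ C := h2'
      linarith
    have h4 : (dpre W a₀ a : ℝ) ≤ (2 : ℝ) ^ n := le_trans h3 (le_of_lt hn)
    have h5 : dpre W a₀ a ≤ (2 : ℝ≥0) ^ (n : ℤ) := by
      rw [zpow_natCast]
      exact_mod_cast h4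
    have h6 : a₀⁻¹ * a ∈ W (n : ℤ) := mem_of_rho_le W hmono hcover h5
    exact ⟨a₀⁻¹ * a, h6, by group⟩
  have hKc : IsCompact ((fun y => a₀ * y) '' W (n : ℤ)) :=
    (hcpt n).image (continuous_mul_left a₀)
  exact hKc.of_isClosed_subset isClosed_closure
    (closure_minimal hsubset hKc.isClosed)


end RCBaux

/-- In a σ-compact locally compact Hausdorff topological group, a subset `A` is relatively
compact if and only if for every group `H` with a left-invariant metric and every continuous
group homomorphism `f : G → H` (for the metric topology on `H`), the image `f '' A` is
bounded. -/
theorem relativelyCompact_iff_bounded_image_sigmaCompact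
    {G : Type*} [Group G] [TopologicalSpace G] [IsTopologicalGroup G]
    [SigmaCompactSpace G] [LocallyCompactSpace G] [T2Space G] (A : Set G) :
    IsCompact (closure A) ↔
      ∀ (H : Type) [Group H] [MetricSpace H],
        (∀ k g h : H, dist (k * g) (k * h) = dist g h) →
        ∀ f : G →* H, Continuous f → Bornology.IsBounded ((f : G → H) '' A) := by
  constructor
  · intro hK H _ _ _hinv f hf
    have h1 : IsCompact ((f : G → H) '' closure A) := hK.image hf
    exact h1.isBounded.subset (Set.image_mono subset_closure)
  · exact RCBaux.reverse_direction A
end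

section
/- Let G be an abelian topological group and let A ⊆ G. Then f(A) is a bounded subset of ℝ for every continuous quasi-homomorphism f : G → ℝ if and only if f(A) is a bounded subset of ℝ for every continuous group homomorphism f : G → ℝ. -/
open Filter Topology

/-- In an abelian topological group, a subset `A` has bounded image under every continuous
quasi-homomorphism `f : G → ℝ` if and only if it has bounded image under every continuous
group homomorphism `f : G → ℝ`. -/
theorem bounded_under_quasiHoms_iff_bounded_under_homs
    {G : Type*} [AddCommGroup G] [TopologicalSpace G] [IsTopologicalAddGroup G] (A : Set G) :
    (∀ f : G → ℝ, Continuous f →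
        (∃ C : ℝ, 0 ≤ C ∧ ∀ x y : G, |f (x + y) - f x - f y| ≤ C) →
        Bornology.IsBounded (f '' A)) ↔
      (∀ f : G →+ ℝ, Continuous f → Bornology.IsBounded ((f : G → ℝ) '' A)) := by
  constructor
  · intro h f hf
    exact h f hf ⟨0, le_refl 0, fun x y => by simp⟩
  · rintro h f hfcont ⟨C, hC0, hC⟩
    set u : G → ℕ → ℝ := fun x n => f ((2 ^ n : ℕ) • x) / 2 ^ n with hu_def
    have hu0 : ∀ x, u x 0 = f x := fun x => by simp [hu_def]
    have hdist : ∀ x n, dist (u x n) (u x (n + 1)) ≤ C * (1 / 2) ^ n := by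
      intro x n
      have hrw : ((2 ^ (n + 1) : ℕ) : ℕ) • x = (2 ^ n : ℕ) • x + (2 ^ n : ℕ) • x := by
        rw [← add_nsmul]; ring_nf
      have key : |f ((2 ^ n : ℕ) • x + (2 ^ n : ℕ) • x) - f ((2 ^ n : ℕ) • x)
          - f ((2 ^ n : ℕ) • x)| ≤ C := hC _ _
      rw [Real.dist_eq]
      have : u x n - u x (n + 1)
          = -(f ((2 ^ n : ℕ) • x + (2 ^ n : ℕ) • x) - f ((2 ^ n : ℕ) • x)
              - f ((2 ^ n : ℕ) • x)) / 2 ^ (n + 1) := by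
        simp only [hu_def, hrw]
        field_simp
        ring
      rw [this, abs_div, abs_neg, abs_of_pos (by positivity : (0:ℝ) < (2:ℝ) ^ (n+1))]
      rw [div_le_iff₀ (by positivity)]
      calc |f ((2 ^ n : ℕ) • x + (2 ^ n : ℕ) • x) - f ((2 ^ n : ℕ) • x) - f ((2 ^ n : ℕ) • x)|
          ≤ C := key
        _ ≤ C * (1 / 2) ^ n * 2 ^ (n + 1) := by
            rw [pow_succ]
            have : (1 / 2 : ℝ) ^ n * (2 ^ n * 2) = 2 := by
              rw [one_div, inv_pow]; field_simp
            nlinarith [this]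
    have hcauchy : ∀ x, ∃ L, Tendsto (u x) atTop (𝓝 L) := fun x =>
      cauchySeq_tendsto_of_complete
        (cauchySeq_of_le_geometric (1 / 2) C (by norm_num) (hdist x))
    choose φ hφ using hcauchy
    have hclose : ∀ x, |f x - φ x| ≤ 2 * C := by
      intro x
      have := dist_le_of_le_geometric_of_tendsto₀ (1 / 2) C (by norm_num) (hdist x) (hφ x)
      rw [hu0, Real.dist_eq] at this
      calc |f x - φ x| ≤ C / (1 - 1 / 2) := this
        _ = 2 * C := by ring
    have hadd : ∀ x y, φ (x + y) = φ x + φ y := by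
      intro x y
      have h1 : Tendsto (fun n => u x n + u y n) atTop (𝓝 (φ x + φ y)) := (hφ x).add (hφ y)
      refine tendsto_nhds_unique (hφ (x + y)) ?_
      refine h1.congr_dist ?_
      have hbound : ∀ n : ℕ, dist (u x n + u y n) (u (x + y) n) ≤ C * (1 / 2) ^ n := by
        intro n
        have hrw : ((2 ^ n : ℕ) : ℕ) • (x + y) = (2 ^ n : ℕ) • x + (2 ^ n : ℕ) • y := by
          rw [smul_add]
        have key := hC ((2 ^ n : ℕ) • x) ((2 ^ n : ℕ) • y)
        rw [Real.dist_eq]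
        have h2n : (0 : ℝ) < 2 ^ n := by positivity
        have heq : u x n + u y n - u (x + y) n
            = -(f ((2 ^ n : ℕ) • x + (2 ^ n : ℕ) • y) - f ((2 ^ n : ℕ) • x)
                - f ((2 ^ n : ℕ) • y)) / 2 ^ n := by
          simp only [hu_def, hrw]; field_simp; ring
        rw [heq, abs_div, abs_neg, abs_of_pos h2n]
        rw [div_le_iff₀ h2n]
        have hpow : (1 / 2 : ℝ) ^ n * 2 ^ n = 1 := by
          rw [one_div, inv_pow]; field_simp
        nlinarith [key]
      refine squeeze_zero (fun n => dist_nonneg) hbound ?_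
      have h2 : Tendsto (fun n : ℕ => C * (1 / 2 : ℝ) ^ n) atTop (𝓝 (C * 0)) :=
        (tendsto_pow_atTop_nhds_zero_of_lt_one (by norm_num) (by norm_num)).const_mul C
      simpa using h2
    have hzero : φ 0 = 0 := by
      have := hadd 0 0
      simp only [add_zero] at this
      linarith
    have hns : ∀ (k : ℕ) (x : G), φ (k • x) = (k : ℝ) * φ x := by
      intro k
      induction k with
      | zero => intro x; simp [hzero]
      | succ k ih =>
          intro x
          rw [succ_nsmul, hadd, ih]
          push_cast; ring
    set Φ : G →+ ℝ := ⟨⟨φ, hzero⟩, fun x y => hadd x y⟩ with hΦ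
    obtain ⟨U, hU, hUf⟩ : ∃ U ∈ 𝓝 (0 : G), ∀ x ∈ U, |f x| < |f 0| + 1 := by
      have hmem : f ⁻¹' Metric.ball (f 0) 1 ∈ 𝓝 (0 : G) :=
        hfcont.continuousAt.preimage_mem_nhds (Metric.ball_mem_nhds _ one_pos)
      refine ⟨_, hmem, fun x hx => ?_⟩
      have h1 : |f x - f 0| < 1 := by simpa [Real.dist_eq] using hx
      have h2 := abs_sub_abs_le_abs_sub (f x) (f 0)
      linarith
    set M : ℝ := |f 0| + 1 + 2 * C with hM
    have hMpos : 0 < M := by positivity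
    have hφU : ∀ x ∈ U, |φ x| ≤ M := by
      intro x hx
      have h1 := hclose x
      have h2 := (hUf x hx).le
      have h3 := abs_sub_abs_le_abs_sub (φ x) (f x)
      have h4 : |φ x - f x| = |f x - φ x| := abs_sub_comm _ _
      rw [hM]; linarith
    have hφcont : Continuous φ := by
      have hat0 : ContinuousAt φ 0 := by
        rw [ContinuousAt, hzero, Metric.tendsto_nhds]
        intro ε hε
        obtain ⟨n, hn⟩ := exists_nat_gt (M / ε)
        have hn0 : (0:ℝ) < (n : ℝ) + 1 := by positivity
        have hcont : Continuous fun x : G => (n + 1) • x := continuous_nsmul _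
        have hVmem : (fun x : G => (n + 1) • x) ⁻¹' U ∈ 𝓝 (0 : G) :=
          hcont.continuousAt.preimage_mem_nhds (by simpa using hU)
        filter_upwards [hVmem] with v hv
        have hb := hφU _ hv
        rw [hns (n + 1) v] at hb
        push_cast at hb
        rw [abs_mul, abs_of_pos hn0] at hb
        have hle : |φ v| ≤ M / ((n : ℝ) + 1) := by
          rw [le_div_iff₀ hn0]; linarith [hb]
        rw [Real.dist_eq, sub_zero]
        calc |φ v| ≤ M / ((n : ℝ) + 1) := hle
          _ < ε := by
              rw [div_lt_iff₀ hn0, mul_comm]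
              exact (div_lt_iff₀ hε).mp (by linarith)
      exact continuous_of_continuousAt_zero Φ hat0
    have hb := h Φ hφcont
    rw [isBounded_iff_forall_norm_le] at hb ⊢
    obtain ⟨R, hR⟩ := hb
    refine ⟨R + 2 * C, ?_⟩
    rintro _ ⟨a, ha, rfl⟩
    have h1 : ‖φ a‖ ≤ R := hR _ ⟨a, ha, rfl⟩
    have h2 := hclose a
    rw [Real.norm_eq_abs] at h1 ⊢
    have h3 := abs_sub_abs_le_abs_sub (f a) (φ a)
    linarith
end

section
/- Let G be an abelian group regarded with the discrete topology, and let A ⊆ G. Then A is finite if and only if for every group H equipped with a left-invariant metric d and every group homomorphism f : G → H, the image f(A) is d-bounded. -/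
open Function Set Pointwise

namespace MetricAux

variable {Q : Type} [Group Q] (q : ℕ → Q)

/-- Filtration of `Q` by finite symmetric sets. -/
def S : ℕ → Set Q
  | 0 => {1}
  | n + 1 => S n ∪ S n * S n ∪ {q n, (q n)⁻¹}

lemma one_mem_S : ∀ n, (1 : Q) ∈ S q n
  | 0 => rfl
  | n + 1 => Or.inl (Or.inl (one_mem_S n))

lemma S_mono_succ (n : ℕ) : S q n ⊆ S q (n + 1) := fun _ hx => Or.inl (Or.inl hx)

lemma S_mono {m n : ℕ} (h : m ≤ n) : S q m ⊆ S q n := by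
  induction h with
  | refl => exact fun _ h => h
  | step _ ih => exact fun x hx => S_mono_succ q _ (ih hx)

lemma S_finite : ∀ n, (S q n).Finite
  | 0 => finite_singleton 1
  | n + 1 => ((S_finite n).union ((S_finite n).mul (S_finite n))).union
      (((finite_singleton (q n)⁻¹)).insert (q n))

lemma inv_mem_S : ∀ n, ∀ x ∈ S q n, x⁻¹ ∈ S q n
  | 0, x, hx => by
    simp only [S, mem_singleton_iff] at hx ⊢; simp [hx]
  | n + 1, x, hx => by
    rcases hx with (hx | hx) | hx
    · exact Or.inl (Or.inl (inv_mem_S n x hx))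
    · obtain ⟨a, ha, b, hb, rfl⟩ := hx
      exact Or.inl (Or.inr ⟨b⁻¹, inv_mem_S n b hb, a⁻¹, inv_mem_S n a ha, (mul_inv_rev a b).symm⟩)
    · rcases hx with rfl | hx
      · exact Or.inr (Or.inr rfl)
      · simp only [mem_singleton_iff] at hx
        subst hx
        exact Or.inr (Or.inl (by simp))

lemma mul_mem_S {m n : ℕ} (hm : 1 ≤ m) (hn : 1 ≤ n) {a b : Q}
    (ha : a ∈ S q m) (hb : b ∈ S q n) : a * b ∈ S q (m + n) := by
  rcases le_total m n with h | h
  · have : a * b ∈ S q (n + 1) :=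
      Or.inl (Or.inr ⟨a, S_mono q h ha, b, hb, rfl⟩)
    exact S_mono q (by omega) this
  · have : a * b ∈ S q (m + 1) :=
      Or.inl (Or.inr ⟨a, ha, b, S_mono q h hb, rfl⟩)
    exact S_mono q (by omega) this

lemma exists_mem_S (hq : Surjective q) (x : Q) : ∃ n, x ∈ S q n := by
  obtain ⟨m, rfl⟩ := hq x
  exact ⟨m + 1, Or.inr (Or.inl rfl)⟩

/-- The length function. -/
noncomputable def ell (hq : Surjective q) (x : Q) : ℕ :=
  @Nat.find _ (Classical.decPred _) (exists_mem_S q hq x)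

variable (hq : Surjective q)

lemma mem_S_ell (x : Q) : x ∈ S q (ell q hq x) :=
  @Nat.find_spec _ (Classical.decPred _) (exists_mem_S q hq x)

lemma ell_le_iff {x : Q} {n : ℕ} : ell q hq x ≤ n ↔ x ∈ S q n := by
  constructor
  · intro h; exact S_mono q h (mem_S_ell q hq x)
  · intro h; exact @Nat.find_le _ _ (Classical.decPred _) _ h

lemma ell_one : ell q hq 1 = 0 :=
  Nat.le_zero.mp ((ell_le_iff q hq).mpr (one_mem_S q 0))

lemma eq_one_of_ell_eq_zero {x : Q} (h : ell q hq x = 0) : x = 1 := by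
  have := mem_S_ell q hq x
  rw [h] at this
  exact this

lemma ell_inv (x : Q) : ell q hq x⁻¹ = ell q hq x := by
  have h1 : ∀ y : Q, ell q hq y⁻¹ ≤ ell q hq y := fun y =>
    (ell_le_iff q hq).mpr (inv_mem_S q _ y (mem_S_ell q hq y))
  have := h1 x⁻¹
  rw [inv_inv] at this
  exact le_antisymm (h1 x) this

lemma ell_mul (x y : Q) : ell q hq (x * y) ≤ ell q hq x + ell q hq y := by
  rcases Nat.eq_zero_or_pos (ell q hq x) with hx | hx
  · rw [eq_one_of_ell_eq_zero q hq hx, one_mul, ell_one q hq, zero_add]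
  rcases Nat.eq_zero_or_pos (ell q hq y) with hy | hy
  · rw [eq_one_of_ell_eq_zero q hq hy, mul_one, ell_one q hq, add_zero]
  exact (ell_le_iff q hq).mpr
    (mul_mem_S q hx hy (mem_S_ell q hq x) (mem_S_ell q hq y))

/-- The left-invariant metric. -/
noncomputable def met : MetricSpace Q where
  dist x y := (ell q hq (x⁻¹ * y) : ℝ)
  dist_self x := by simp [ell_one q hq]
  dist_comm x y := by
    show ((ell q hq (x⁻¹ * y) : ℝ)) = ((ell q hq (y⁻¹ * x) : ℝ))
    have h : y⁻¹ * x = (x⁻¹ * y)⁻¹ := by group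
    rw [h, ell_inv q hq]
  dist_triangle x y z := by
    show ((ell q hq (x⁻¹ * z) : ℝ)) ≤ ((ell q hq (x⁻¹ * y) : ℝ)) + ((ell q hq (y⁻¹ * z) : ℝ))
    have h : x⁻¹ * z = (x⁻¹ * y) * (y⁻¹ * z) := by group
    rw [h]
    exact_mod_cast ell_mul q hq (x⁻¹ * y) (y⁻¹ * z)
  eq_of_dist_eq_zero {x y} h := by
    have h' : ((ell q hq (x⁻¹ * y) : ℕ) : ℝ) = 0 := h
    have h0 : ell q hq (x⁻¹ * y) = 0 := Nat.cast_eq_zero.mp h'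
    have h1 := eq_one_of_ell_eq_zero q hq h0
    exact (inv_mul_eq_one.mp h1)

end MetricAux

/-- On a countable group there is a left-invariant metric in which every bounded set
is finite. -/
theorem exists_unbounded_metric (Q : Type) [Group Q] [Countable Q] :
    ∃ m : MetricSpace Q,
      (∀ k g h : Q, m.toDist.dist (k * g) (k * h) = m.toDist.dist g h) ∧
      ∀ s : Set Q, @Bornology.IsBounded Q m.toBornology s → s.Finite := by
  obtain ⟨q, hq⟩ := exists_surjective_nat Q
  refine ⟨MetricAux.met q hq, fun k g h => ?_, fun s hs => ?_⟩
  · show ((MetricAux.ell q hq ((k*g)⁻¹ * (k*h)) : ℝ)) = ((MetricAux.ell q hq (g⁻¹ * h) : ℝ))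
    have : (k*g)⁻¹ * (k*h) = g⁻¹ * h := by group
    rw [this]
  · letI := MetricAux.met q hq
    rcases s.eq_empty_or_nonempty with rfl | ⟨x₀, hx₀⟩
    · exact Set.finite_empty
    obtain ⟨C, hC⟩ := Metric.isBounded_iff.mp hs
    set N := ⌈C⌉₊
    have hsub : s ⊆ (fun y => x₀ * y) '' MetricAux.S q N := by
      intro y hy
      have hd : dist x₀ y ≤ C := hC hx₀ hy
      have h2 : (MetricAux.ell q hq (x₀⁻¹ * y) : ℝ) ≤ C := hd
      have hN : MetricAux.ell q hq (x₀⁻¹ * y) ≤ N :=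
        Nat.cast_le.mp (h2.trans (Nat.le_ceil C))
      exact ⟨x₀⁻¹ * y, (MetricAux.ell_le_iff q hq).mp hN, by group⟩
    exact ((MetricAux.S_finite q N).image _).subset hsub


/-- Every commutative group with a distinguished injective sequence admits a homomorphism
to a countable group which is injective on that sequence. -/
theorem exists_countable_target {G : Type*} [CommGroup G] (a : ℕ → G) (ha : Injective a) :
    ∃ (Q : Type) (_ : Group Q) (_ : Countable Q) (f : G →* Q),
      Injective (fun n => f (a n)) := by
  classical
  -- the free abelian group on `ℕ` and its rational version
  set M := Additive G
  set φ : (ℕ →₀ ℤ) →+ M :=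
    Finsupp.liftAddHom (fun n => zmultiplesHom M (Additive.ofMul (a n))) with hφdef
  have hφs : ∀ n, φ (Finsupp.single n 1) = Additive.ofMul (a n) := by
    intro n
    simp [hφdef]
  set ι : (ℕ →₀ ℤ) →+ (ℕ →₀ ℚ) := Finsupp.mapRange.addMonoidHom (Int.castAddHom ℚ) with hιdef
  have hι : Injective ι := by
    intro x y h
    ext n
    have := DFunLike.congr_fun h n
    simp only [hιdef, Finsupp.mapRange.addMonoidHom_apply, Finsupp.mapRange_apply,
      Int.coe_castAddHom] at this
    exact_mod_cast this
  set R : AddSubgroup (ℕ →₀ ℤ) := φ.ker with hRdef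
  set N : AddSubgroup (ℕ →₀ ℚ) := R.map ι with hNdef
  set D := (ℕ →₀ ℚ) ⧸ N with hDdef
  -- divisibility of `D`
  letI : DivisibleBy (ℕ →₀ ℚ) ℤ :=
    { div := fun x n => (n : ℚ)⁻¹ • x
      div_zero := fun x => by simp
      div_cancel := fun {n} x hn => by
        rw [← Int.cast_smul_eq_zsmul ℚ, smul_smul, mul_inv_cancel₀ (by exact_mod_cast hn),
          one_smul] }
  letI : DivisibleBy D ℤ :=
    Function.Surjective.divisibleBy (QuotientAddGroup.mk' N)
      (QuotientAddGroup.mk'_surjective N) (fun x n => by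
        exact map_zsmul (QuotientAddGroup.mk' N) n x)
  set θ : (ℕ →₀ ℤ) →+ D := (QuotientAddGroup.mk' N).comp ι with hθdef
  have key : ∀ x, θ x = 0 ↔ x ∈ R := by
    intro x
    rw [hθdef]
    simp only [AddMonoidHom.coe_comp, comp_apply, QuotientAddGroup.mk'_apply]
    rw [QuotientAddGroup.eq_zero_iff]
    constructor
    · rintro h
      obtain ⟨r, hr, hrx⟩ := h
      rwa [← hι hrx]
    · intro h
      exact ⟨x, h, rfl⟩
  set φbar := QuotientAddGroup.lift R φ (fun x hx => hx) with hφbar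
  have hφbarinj : Injective φbar := by
    rw [injective_iff_map_eq_zero]
    intro y
    refine QuotientAddGroup.induction_on y ?_
    intro x hx
    rw [hφbar, QuotientAddGroup.lift_mk'] at hx
    rw [QuotientAddGroup.eq_zero_iff]
    exact hx
  set θbar := QuotientAddGroup.lift R θ (fun x hx => (key x).mpr hx) with hθbar
  obtain ⟨ψ, hψ⟩ :=
    (Module.Baer.of_divisible D).extension_property_addMonoidHom φbar hφbarinj θbar
  have hψφ : ∀ x, ψ (φ x) = θ x := by
    intro x
    have h1 : φbar (QuotientAddGroup.mk x) = φ x := QuotientAddGroup.lift_mk' _ _ x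
    have h2 : θbar (QuotientAddGroup.mk x) = θ x := QuotientAddGroup.lift_mk' _ _ x
    rw [← h1, ← h2, ← hψ]
    rfl
  haveI hc : Countable D := Function.Surjective.countable (QuotientAddGroup.mk'_surjective N)
  refine ⟨Multiplicative D, inferInstance, hc,
    AddMonoidHom.toMultiplicativeRight ψ, ?_⟩
  intro n m h
  simp only [AddMonoidHom.coe_toMultiplicativeRight, Function.comp_apply] at h
  have h' : ψ (Additive.ofMul (a n)) = ψ (Additive.ofMul (a m)) := by
    exact_mod_cast h
  rw [← hφs n, ← hφs m, hψφ, hψφ] at h'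
  have : θ (Finsupp.single n 1 - Finsupp.single m 1) = 0 := by
    rw [map_sub, h', sub_self]
  have hmem := (key _).mp this
  have : φ (Finsupp.single n 1 - Finsupp.single m 1) = 0 := hmem
  rw [map_sub, hφs, hφs, sub_eq_zero] at this
  exact ha (by exact_mod_cast this)


/-- For an abelian group `G` (with the discrete topology) and `A ⊆ G`: `A` is finite if and
only if for every group `H` with a left-invariant metric and every group homomorphism
`f : G → H`, the image `f '' A` is bounded. -/
theorem finite_iff_bounded_image_under_homs_abelian
    {G : Type*} [CommGroup G] [TopologicalSpace G] [DiscreteTopology G] (A : Set G) :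
    A.Finite ↔
      ∀ (H : Type) [Group H] [MetricSpace H],
        (∀ k g h : H, dist (k * g) (k * h) = dist g h) →
        ∀ f : G →* H, Bornology.IsBounded ((f : G → H) '' A) := by
  constructor
  · intro hfin H _ _ _ f
    exact (hfin.image _).isBounded
  · intro h
    by_contra hinf
    have hinf' : A.Infinite := hinf
    set e := hinf'.natEmbedding with he
    set a : ℕ → G := fun n => (e n : G) with ha
    have hainj : Function.Injective a := fun n m hnm => e.injective (Subtype.ext hnm)
    have hamem : ∀ n, a n ∈ A := fun n => (e n).2
    obtain ⟨Q, _, _, f, hfinj⟩ := exists_countable_target a hainj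
    obtain ⟨m, hminv, hmfin⟩ := exists_unbounded_metric Q
    letI := m
    have hb := h Q hminv f
    have hfinite := hmfin _ hb
    have himg : ((f : G → Q) '' A).Infinite :=
      Set.infinite_of_injective_forall_mem hfinj (fun n => ⟨a n, hamem n, rfl⟩)
    exact himg hfinite
end

section
/- Let G be a topological group and let A ⊆ G be a subset with the following property: whenever (Vₙ)_{n ≥ 1} is a sequence of open subsets of G with Vₙ ⊆ Vₙ₊₁ and Vₙ·Vₙ ⊆ Vₙ₊₁ for all n, and ⋃ₙ Vₙ = G, there exists k with A ⊆ V_k. Then for every group H equipped with a left-invariant metric d and every continuous quasi-homomorphism f : G → H (H carrying the metric topology), the image f(A) is d-bounded. -/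
open Pointwise

/-- If a subset `A` of a topological group `G` is contained in some member of every
increasing exhaustion `V₁ ⊆ V₂ ⊆ ⋯` of `G` by open sets with `Vₙ · Vₙ ⊆ Vₙ₊₁`, then the
image of `A` under any continuous quasi-homomorphism to a group with a left-invariant
metric is bounded. -/
theorem bounded_image_under_continuous_quasiHom_of_exhaustion_property
    {G : Type*} [Group G] [TopologicalSpace G] [IsTopologicalGroup G] (A : Set G)
    (hA : ∀ V : ℕ → Set G, (∀ n, IsOpen (V n)) → (∀ n, V n ⊆ V (n + 1)) →
      (∀ n, V n * V n ⊆ V (n + 1)) → (⋃ n, V n) = Set.univ → ∃ k, A ⊆ V k)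
    (H : Type*) [Group H] [MetricSpace H]
    (hd : ∀ k g h : H, dist (k * g) (k * h) = dist g h)
    (f : G → H) (hf : Continuous f)
    (C : ℝ) (hC : 0 ≤ C) (hqh : ∀ x y : G, dist (f (x * y)) (f x * f y) ≤ C) :
    Bornology.IsBounded (f '' A) := by
  set V : ℕ → Set G := fun n => f ⁻¹' Metric.ball (1 : H) (3 ^ n * (C + 1)) with hVdef
  have hpow : ∀ n : ℕ, (1 : ℝ) ≤ 3 ^ n := fun n => one_le_pow₀ (by norm_num)
  have hmem : ∀ n x, x ∈ V n ↔ dist (f x) 1 < 3 ^ n * (C + 1) := by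
    intro n x; simp [hVdef, Metric.mem_ball]
  obtain ⟨k, hk⟩ := hA V
    (fun n => Metric.isOpen_ball.preimage hf)
    (by
      intro n x hx
      rw [hmem] at hx ⊢
      have h1 := hpow n
      calc dist (f x) 1 < 3 ^ n * (C + 1) := hx
        _ ≤ 3 ^ (n + 1) * (C + 1) := by
            have : (3:ℝ) ^ n ≤ 3 ^ (n+1) := by
              apply pow_le_pow_right₀ (by norm_num); omega
            nlinarith)
    (by
      intro n x hx
      rw [hmem]
      obtain ⟨a, ha, b, hb, rfl⟩ := hx
      rw [hmem] at ha hb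
      have key : dist (f a * f b) (f a) = dist (f b) 1 := by
        have := hd (f a) (f b) 1
        simpa using this
      have h1 := hpow n
      calc dist (f (a * b)) 1
          ≤ dist (f (a * b)) (f a * f b) + dist (f a * f b) (f a) + dist (f a) 1 :=
            dist_triangle4 _ _ _ _
        _ ≤ C + dist (f b) 1 + dist (f a) 1 := by rw [key]; linarith [hqh a b]
        _ < 3 ^ (n + 1) * (C + 1) := by
            rw [pow_succ]
            nlinarith)
    (by
      ext x
      simp only [Set.mem_iUnion, Set.mem_univ, iff_true]
      obtain ⟨n, hn⟩ := pow_unbounded_of_one_lt (dist (f x) 1) (by norm_num : (1:ℝ) < 3)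
      refine ⟨n, (hmem n x).2 ?_⟩
      have h1 := hpow n
      nlinarith)
  have : f '' A ⊆ Metric.ball (1 : H) (3 ^ k * (C + 1)) := by
    rintro _ ⟨x, hx, rfl⟩
    exact hk hx
  exact Metric.isBounded_ball.subset this
end
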